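/- arXiv:1105.0857 — 4 statements merged into one kernel-verified Lean document; each statement's English description precedes it below -/
import Mathlib

section
/- Let Z_1,...,Z_n be independent, symmetric (about 0) real random variables. Then for all t > 0, Pr[ (∑ Z_i)^2 / (∑ Z_i^2) > t ] ≤ 2·exp(−t/2), where the event is interpreted on the set where ∑ Z_i^2 > 0. -/
open MeasureTheory ProbabilityTheory Finset

noncomputable def sgn (b : Bool) : ℝ := if b then 1 else -1

lemma sgn_sq (b : Bool) : sgn b ^ 2 = 1 := by cases b <;> norm_num [sgn]

lemma mgf_bound {n : ℕ} (x : Fin n → ℝ) (l : ℝ) :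
    ∑ ε : Fin n → Bool, Real.exp (l * ∑ i, sgn (ε i) * x i)
      ≤ 2 ^ n * Real.exp (l ^ 2 * (∑ i, x i ^ 2) / 2) := by
  have h1 : ∀ ε : Fin n → Bool, Real.exp (l * ∑ i, sgn (ε i) * x i)
      = ∏ i, Real.exp (l * (sgn (ε i) * x i)) := by
    intro ε
    rw [← Real.exp_sum, Finset.mul_sum]
  simp_rw [h1]
  have h2 : ∑ ε : Fin n → Bool, ∏ i, Real.exp (l * (sgn (ε i) * x i))
      = ∏ i, ∑ b : Bool, Real.exp (l * (sgn b * x i)) := by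
    rw [Finset.prod_univ_sum]
    rw [Fintype.piFinset_univ]
  rw [h2]
  have h3 : ∀ i : Fin n, ∑ b : Bool, Real.exp (l * (sgn b * x i))
      ≤ 2 * Real.exp ((l * x i) ^ 2 / 2) := by
    intro i
    have := Real.cosh_le_exp_half_sq (l * x i)
    rw [Real.cosh_eq] at this
    have h4 : ∑ b : Bool, Real.exp (l * (sgn b * x i))
        = Real.exp (l * x i) + Real.exp (-(l * x i)) := by
      simp [sgn, Fintype.sum_bool]
    rw [h4]
    nlinarith [this]
  calc ∏ i, ∑ b : Bool, Real.exp (l * (sgn b * x i))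
      ≤ ∏ i, 2 * Real.exp ((l * x i) ^ 2 / 2) := by
        apply Finset.prod_le_prod
        · intro i _
          apply Finset.sum_nonneg; intro b _; positivity
        · intro i _; exact h3 i
    _ = 2 ^ n * Real.exp (l ^ 2 * (∑ i, x i ^ 2) / 2) := by
        rw [Finset.prod_mul_distrib, Finset.prod_const, Finset.card_univ, Fintype.card_fin,
          ← Real.exp_sum]
        congr 1
        simp_rw [mul_pow]
        rw [← Finset.sum_div, ← Finset.mul_sum]

lemma pointwise_bound {n : ℕ} (t : ℝ) (ht : 0 < t) (x : Fin n → ℝ) :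
    ∑ ε : Fin n → Bool,
      (if (0 < ∑ i, (sgn (ε i) * x i) ^ 2 ∧
          t < (∑ i, sgn (ε i) * x i) ^ 2 / ∑ i, (sgn (ε i) * x i) ^ 2) then (1:ℝ) else 0)
      ≤ 2 ^ n * (2 * Real.exp (-t / 2)) := by
  have hVinv : ∀ ε : Fin n → Bool, ∑ i, (sgn (ε i) * x i) ^ 2 = ∑ i, x i ^ 2 := by
    intro ε
    refine Finset.sum_congr rfl fun i _ => ?_
    rw [mul_pow, sgn_sq, one_mul]
  simp_rw [hVinv]
  set V : ℝ := ∑ i, x i ^ 2 with hV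
  rcases le_or_gt V 0 with hV0 | hV0
  · have : ∀ ε : Fin n → Bool,
        (if (0 < V ∧ t < (∑ i, sgn (ε i) * x i) ^ 2 / V) then (1:ℝ) else 0) = 0 := by
      intro ε
      rw [if_neg]
      rintro ⟨h1, _⟩
      exact absurd h1 (not_lt.2 hV0)
    simp_rw [this]
    rw [Finset.sum_const]
    simp
    positivity
  · set u : ℝ := Real.sqrt (t * V) with hu
    have htV : 0 < t * V := mul_pos ht hV0
    have hu0 : 0 < u := Real.sqrt_pos.2 htV
    have hu2 : u ^ 2 = t * V := Real.sq_sqrt htV.le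
    set l : ℝ := u / V with hl
    have hl0 : 0 < l := div_pos hu0 hV0
    have hlu : l * u = t := by
      rw [hl, div_mul_eq_mul_div, ← sq, hu2, mul_div_assoc, div_self hV0.ne', mul_one]
    have hlV : l ^ 2 * V / 2 = t / 2 := by
      rw [hl, div_pow, div_mul_eq_mul_div, hu2]
      field_simp
    have key : ∀ ε : Fin n → Bool,
        (if (0 < V ∧ t < (∑ i, sgn (ε i) * x i) ^ 2 / V) then (1:ℝ) else 0)
          ≤ Real.exp (l * (∑ i, sgn (ε i) * x i) - l * u)
            + Real.exp ((-l) * (∑ i, sgn (ε i) * x i) - l * u) := by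
      intro ε
      set S : ℝ := ∑ i, sgn (ε i) * x i
      split_ifs with h
      · obtain ⟨-, h2⟩ := h
        have hS2 : u ^ 2 < S ^ 2 := by
          rw [hu2]
          exact (lt_div_iff₀ hV0).1 h2
        have : u < |S| := by
          rw [← sq_abs S] at hS2
          exact lt_of_pow_lt_pow_left₀ 2 (abs_nonneg S) hS2
        rcases abs_cases S with ⟨hc, _⟩ | ⟨hc, _⟩
        · have : 0 ≤ l * S - l * u := by nlinarith [hc ▸ this]
          have := Real.one_le_exp this
          nlinarith [Real.exp_nonneg ((-l) * S - l * u)]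
        · have : 0 ≤ (-l) * S - l * u := by nlinarith [hc ▸ this]
          have := Real.one_le_exp this
          nlinarith [Real.exp_nonneg (l * S - l * u)]
      · positivity
    calc ∑ ε : Fin n → Bool,
          (if (0 < V ∧ t < (∑ i, sgn (ε i) * x i) ^ 2 / V) then (1:ℝ) else 0)
        ≤ ∑ ε : Fin n → Bool,
            (Real.exp (l * (∑ i, sgn (ε i) * x i) - l * u)
              + Real.exp ((-l) * (∑ i, sgn (ε i) * x i) - l * u)) :=
          Finset.sum_le_sum fun ε _ => key ε
      _ = Real.exp (-(l * u)) * ((∑ ε : Fin n → Bool, Real.exp (l * ∑ i, sgn (ε i) * x i))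
            + ∑ ε : Fin n → Bool, Real.exp ((-l) * ∑ i, sgn (ε i) * x i)) := by
          rw [Finset.sum_add_distrib, mul_add]
          congr 1 <;>
          · rw [Finset.mul_sum]
            refine Finset.sum_congr rfl fun ε _ => ?_
            rw [← Real.exp_add]
            ring_nf
      _ ≤ Real.exp (-(l * u)) * (2 ^ n * Real.exp (l ^ 2 * V / 2)
            + 2 ^ n * Real.exp ((-l) ^ 2 * V / 2)) := by
          have h1 := mgf_bound x l
          have h2 := mgf_bound x (-l)
          have he : (0:ℝ) ≤ Real.exp (-(l * u)) := Real.exp_nonneg _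
          rw [← hV] at h1 h2
          nlinarith
      _ = 2 ^ n * (2 * Real.exp (-t / 2)) := by
          rw [neg_sq, hlV, hlu]
          have hE : Real.exp (-t) * Real.exp (t / 2) = Real.exp (-t / 2) := by
            rw [← Real.exp_add]; ring_nf
          linear_combination (2 * (2:ℝ) ^ n) * hE

lemma map_eq_pi' {Ω : Type*} [MeasurableSpace Ω] (μ : Measure Ω) [IsProbabilityMeasure μ]
    {n : ℕ} (Z : Fin n → Ω → ℝ) (hmeas : ∀ i, Measurable (Z i))
    (hindep : iIndepFun Z μ) :
    Measure.map (fun ω i => Z i ω) μ = Measure.pi (fun i => Measure.map (Z i) μ) := by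
  haveI : ∀ i, IsProbabilityMeasure (Measure.map (Z i) μ) :=
    fun i => Measure.isProbabilityMeasure_map (hmeas i).aemeasurable
  have hφ : Measurable (fun ω i => Z i ω) := measurable_pi_lambda _ hmeas
  refine ((Measure.pi_eq fun s hs => ?_).symm)
  rw [Measure.map_apply hφ (MeasurableSet.univ_pi hs)]
  have hpre : (fun ω i => Z i ω) ⁻¹' (Set.pi Set.univ s) = ⋂ i ∈ Finset.univ, Z i ⁻¹' s i := by
    ext ω
    simp [Set.mem_pi]
  rw [hpre, hindep.measure_inter_preimage_eq_mul Finset.univ (fun i _ => hs i)]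
  exact Finset.prod_congr rfl fun i _ => (Measure.map_apply (hmeas i) (hs i)).symm

/-- self-normalized tail bound for independent symmetric random variables. -/
theorem stmt_0 {Ω : Type*} [MeasurableSpace Ω] (μ : Measure Ω) [IsProbabilityMeasure μ]
    (n : ℕ) (Z : Fin n → Ω → ℝ)
    (hmeas : ∀ i, Measurable (Z i))
    (hindep : iIndepFun Z μ)
    (hsym : ∀ i, Measure.map (Z i) μ = Measure.map (fun ω => -(Z i ω)) μ)
    (t : ℝ) (ht : 0 < t) :
    (μ {ω | 0 < ∑ i, (Z i ω) ^ 2 ∧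
        t < (∑ i, Z i ω) ^ 2 / ∑ i, (Z i ω) ^ 2}).toReal ≤ 2 * Real.exp (-t / 2) := by
  classical
  set E : Set (Fin n → ℝ) :=
    {y | 0 < ∑ i, y i ^ 2 ∧ t < (∑ i, y i) ^ 2 / ∑ i, y i ^ 2} with hEdef
  have hsum1 : Measurable (fun y : Fin n → ℝ => ∑ i, y i ^ 2) :=
    Finset.measurable_sum _ fun i _ => (measurable_pi_apply i).pow_const 2
  have hsum2 : Measurable (fun y : Fin n → ℝ => (∑ i, y i) ^ 2 / ∑ i, y i ^ 2) :=
    ((Finset.measurable_sum _ fun i _ => measurable_pi_apply i).pow_const 2).div hsum1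
  have hE : MeasurableSet E :=
    (measurableSet_lt measurable_const hsum1).inter (measurableSet_lt measurable_const hsum2)
  have hmφ : ∀ ε : Fin n → Bool, Measurable (fun ω i => sgn (ε i) * Z i ω) :=
    fun ε => measurable_pi_lambda _ fun i => (hmeas i).const_mul _
  have key : ∀ ε : Fin n → Bool,
      Measure.map (fun ω i => sgn (ε i) * Z i ω) μ
        = Measure.pi (fun i => Measure.map (Z i) μ) := by
    intro ε
    have hm : ∀ i, Measurable (fun ω => sgn (ε i) * Z i ω) := fun i => (hmeas i).const_mul _
    have hi : iIndepFun (fun i ω => sgn (ε i) * Z i ω) μ :=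
      hindep.comp (fun i y => sgn (ε i) * y) fun i => measurable_id.const_mul _
    rw [map_eq_pi' μ _ hm hi]
    refine congrArg Measure.pi (funext fun i => ?_)
    cases hb : ε i
    · have h1 : (fun ω => sgn false * Z i ω) = fun ω => -(Z i ω) := by
        funext ω; simp [sgn]
      rw [h1]
      exact (hsym i).symm
    · have h1 : (fun ω => sgn true * Z i ω) = Z i := by
        funext ω; simp [sgn]
      rw [h1]
  set A : (Fin n → Bool) → Set Ω := fun ε => (fun ω i => sgn (ε i) * Z i ω) ⁻¹' E with hA
  have hAmeas : ∀ ε, MeasurableSet (A ε) := fun ε => (hmφ ε) hE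
  have hAeq : ∀ ε : Fin n → Bool, μ (A ε) = μ (A (fun _ => true)) := by
    intro ε
    calc μ (A ε) = Measure.map (fun ω i => sgn (ε i) * Z i ω) μ E :=
          (Measure.map_apply (hmφ ε) hE).symm
      _ = Measure.map (fun ω i => sgn ((fun _ : Fin n => true) i) * Z i ω) μ E := by
          rw [key ε, key (fun _ => true)]
      _ = μ (A (fun _ => true)) := Measure.map_apply (hmφ _) hE
  have hintg : ∀ ε : Fin n → Bool, Integrable (Set.indicator (A ε) (1 : Ω → ℝ)) μ :=
    fun ε => (integrable_const 1).indicator (hAmeas ε)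
  have hsum : ∑ ε : Fin n → Bool, (μ (A ε)).toReal
      = ∫ ω, ∑ ε : Fin n → Bool, Set.indicator (A ε) (1 : Ω → ℝ) ω ∂μ := by
    rw [integral_finset_sum _ fun ε _ => hintg ε]
    exact Finset.sum_congr rfl fun ε _ => (integral_indicator_one (hAmeas ε)).symm
  have hpt : ∀ ω, ∑ ε : Fin n → Bool, Set.indicator (A ε) (1 : Ω → ℝ) ω
      ≤ 2 ^ n * (2 * Real.exp (-t / 2)) := by
    intro ω
    refine le_trans (le_of_eq ?_) (pointwise_bound t ht (fun i => Z i ω))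
    refine Finset.sum_congr rfl fun ε _ => ?_
    simp only [Set.indicator_apply, Pi.one_apply]
    refine if_congr ?_ rfl rfl
    simp only [hA, hEdef, Set.mem_preimage, Set.mem_setOf_eq]
  have hbound : ∑ ε : Fin n → Bool, (μ (A ε)).toReal ≤ 2 ^ n * (2 * Real.exp (-t / 2)) := by
    rw [hsum]
    calc ∫ ω, ∑ ε : Fin n → Bool, Set.indicator (A ε) (1 : Ω → ℝ) ω ∂μ
        ≤ ∫ _ω, (2 ^ n * (2 * Real.exp (-t / 2)) : ℝ) ∂μ :=
          integral_mono (integrable_finset_sum _ fun ε _ => hintg ε) (integrable_const _) hpt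
      _ = 2 ^ n * (2 * Real.exp (-t / 2)) := by simp
  have hcard : ∑ ε : Fin n → Bool, (μ (A ε)).toReal
      = 2 ^ n * (μ (A (fun _ => true))).toReal := by
    rw [Finset.sum_congr rfl fun ε _ => by rw [hAeq ε], Finset.sum_const, Finset.card_univ,
      Fintype.card_fun, Fintype.card_bool, Fintype.card_fin, nsmul_eq_mul, Nat.cast_pow,
      Nat.cast_ofNat]
  rw [hcard] at hbound
  have hevent : {ω | 0 < ∑ i, (Z i ω) ^ 2 ∧ t < (∑ i, Z i ω) ^ 2 / ∑ i, (Z i ω) ^ 2}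
      = A (fun _ => true) := by
    ext ω
    simp [hA, hEdef, Set.mem_preimage, Set.mem_setOf_eq, sgn]
  rw [hevent]
  have h2n : (0:ℝ) < 2 ^ n := by positivity
  exact le_of_mul_le_mul_left hbound h2n
end

section
/- Let Z_1,...,Z_n (n ≥ 2) be independent, symmetric, mean-zero random variables. Let μ̂ = (1/n)∑ Z_i, σ̂² = (1/(n−1))∑(Z_i − μ̂)², and T = μ̂/(σ̂/√n). Then for all t > 0, Pr[ T² ≥ t² ] ≤ 2·exp( −(1/2)·t²/(1 + t²/(n−1)) ). -/
open MeasureTheory ProbabilityTheory Finset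

lemma sum_exp_radem (n : ℕ) (v : Fin n → ℝ) :
    ∑ ε : Fin n → Bool, Real.exp (∑ i, if ε i then v i else -v i)
      = ∏ i, (Real.exp (v i) + Real.exp (-v i)) := by
  have h := Finset.prod_univ_sum (fun _ : Fin n => (Finset.univ : Finset Bool))
      (fun i e => Real.exp (if e then v i else -v i))
  rw [Fintype.piFinset_univ] at h
  calc ∑ ε : Fin n → Bool, Real.exp (∑ i, if ε i then v i else -v i)
      = ∑ ε : Fin n → Bool, ∏ i, Real.exp (if ε i then v i else -v i) := by
        simp [Real.exp_sum]
    _ = ∏ i, ∑ e : Bool, Real.exp (if e then v i else -v i) := h.symm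
    _ = ∏ i, (Real.exp (v i) + Real.exp (-v i)) := by
        refine Finset.prod_congr rfl fun i _ => ?_
        simp [Fintype.sum_bool]

lemma count_one_sided (n : ℕ) (a : Fin n → ℝ) (θ b : ℝ) (hθ : 0 ≤ θ) :
    ((Finset.univ.filter fun ε : Fin n → Bool =>
        b ≤ ∑ i, if ε i then a i else -a i).card : ℝ)
      ≤ 2 ^ n * Real.exp (θ ^ 2 * (∑ i, (a i) ^ 2) / 2 - θ * b) := by
  classical
  have h1 : ((Finset.univ.filter fun ε : Fin n → Bool =>
      b ≤ ∑ i, if ε i then a i else -a i).card : ℝ)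
      ≤ ∑ ε : Fin n → Bool, Real.exp (θ * (∑ i, if ε i then a i else -a i) - θ * b) := by
    rw [← Finset.sum_boole]
    refine Finset.sum_le_sum fun ε _ => ?_
    by_cases hε : b ≤ ∑ i, if ε i then a i else -a i
    · simp only [hε, if_true]
      rw [show θ * (∑ i, if ε i then a i else -a i) - θ * b
          = θ * ((∑ i, if ε i then a i else -a i) - b) by ring]
      exact Real.one_le_exp (mul_nonneg hθ (by linarith))
    · simp only [hε, if_false]
      positivity
  have h2 : ∑ ε : Fin n → Bool, Real.exp (θ * (∑ i, if ε i then a i else -a i) - θ * b)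
      = Real.exp (-(θ * b)) * ∏ i, (Real.exp (θ * a i) + Real.exp (-(θ * a i))) := by
    rw [← sum_exp_radem n (fun i => θ * a i), Finset.mul_sum]
    refine Finset.sum_congr rfl fun ε _ => ?_
    rw [← Real.exp_add]
    congr 1
    rw [Finset.mul_sum]
    have : ∀ i, θ * (if ε i then a i else -a i) = (if ε i then θ * a i else -(θ * a i)) := by
      intro i; by_cases h : ε i <;> simp [h] <;> ring
    simp_rw [this]
    ring
  have h3 : ∀ i : Fin n, Real.exp (θ * a i) + Real.exp (-(θ * a i))
      ≤ 2 * Real.exp ((θ * a i) ^ 2 / 2) := by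
    intro i
    have := Real.cosh_le_exp_half_sq (θ * a i)
    rw [Real.cosh_eq] at this
    linarith
  have h4 : ∏ i, (Real.exp (θ * a i) + Real.exp (-(θ * a i)))
      ≤ ∏ i, 2 * Real.exp ((θ * a i) ^ 2 / 2) := by
    refine Finset.prod_le_prod (fun i _ => by positivity) (fun i _ => h3 i)
  have h5 : ∏ i : Fin n, 2 * Real.exp ((θ * a i) ^ 2 / 2)
      = 2 ^ n * Real.exp (θ ^ 2 * (∑ i, (a i) ^ 2) / 2) := by
    rw [Finset.prod_mul_distrib, Finset.prod_const, ← Real.exp_sum]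
    simp only [Finset.card_univ, Fintype.card_fin]
    rw [Finset.mul_sum, Finset.sum_div]
    exact congrArg (2 ^ n * Real.exp ·) (Finset.sum_congr rfl fun i _ => by ring)
  calc ((Finset.univ.filter fun ε : Fin n → Bool =>
      b ≤ ∑ i, if ε i then a i else -a i).card : ℝ)
      ≤ Real.exp (-(θ * b)) * ∏ i, (Real.exp (θ * a i) + Real.exp (-(θ * a i))) := by
        rw [← h2]; exact h1.trans (le_of_eq (Finset.sum_congr rfl fun ε _ => by
          rw [show θ * (∑ i, if ε i then a i else -a i) - θ * b
            = -(θ*b) + θ * (∑ i, if ε i then a i else -a i) by ring]))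
    _ ≤ Real.exp (-(θ * b)) * (2 ^ n * Real.exp (θ ^ 2 * (∑ i, (a i) ^ 2) / 2)) := by
        exact mul_le_mul_of_nonneg_left (h4.trans (le_of_eq h5)) (Real.exp_pos _).le
    _ = 2 ^ n * Real.exp (θ ^ 2 * (∑ i, (a i) ^ 2) / 2 - θ * b) := by
        rw [mul_comm (Real.exp (-(θ * b))), mul_assoc, ← Real.exp_add]
        ring_nf

lemma count_two_sided (n : ℕ) (a : Fin n → ℝ) (s : ℝ) (hs : 0 < s)
    (hQ : 0 < ∑ i, (a i) ^ 2) :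
    ((Finset.univ.filter fun ε : Fin n → Bool =>
        s * (∑ i, (a i) ^ 2) ≤ (∑ i, if ε i then a i else -a i) ^ 2).card : ℝ)
      ≤ 2 ^ n * (2 * Real.exp (-s / 2)) := by
  classical
  set Q := ∑ i, (a i) ^ 2 with hQdef
  set b := Real.sqrt (s * Q) with hb
  set θ := Real.sqrt (s / Q) with hθdef
  have hθ : 0 ≤ θ := Real.sqrt_nonneg _
  have hθsq : θ ^ 2 = s / Q := Real.sq_sqrt (by positivity)
  have hθb : θ * b = s := by
    rw [hθdef, hb, ← Real.sqrt_mul (by positivity),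
      show s / Q * (s * Q) = s ^ 2 by field_simp]
    exact Real.sqrt_sq hs.le
  have hQ' : ∑ i, ((-a) i) ^ 2 = Q := by
    simp [hQdef]
  have hexp : θ ^ 2 * Q / 2 - θ * b = -s / 2 := by
    rw [hθsq, hθb]; field_simp; ring
  have hsub : (Finset.univ.filter fun ε : Fin n → Bool =>
        s * Q ≤ (∑ i, if ε i then a i else -a i) ^ 2)
      ⊆ (Finset.univ.filter fun ε : Fin n → Bool =>
          b ≤ ∑ i, if ε i then a i else -a i)
        ∪ (Finset.univ.filter fun ε : Fin n → Bool =>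
          b ≤ ∑ i, if ε i then (-a) i else -((-a) i)) := by
    intro ε hε
    simp only [Finset.mem_filter, Finset.mem_univ, true_and] at hε
    set x := ∑ i, if ε i then a i else -a i with hx
    have hb2 : b ^ 2 ≤ x ^ 2 := by
      rw [hb, Real.sq_sqrt (by positivity)]; exact hε
    have habs : b ≤ |x| := by
      by_contra hcon
      push_neg at hcon
      have : x ^ 2 < b ^ 2 := by
        calc x ^ 2 = |x| ^ 2 := (sq_abs x).symm
          _ < b ^ 2 := by
            apply pow_lt_pow_left₀ hcon (abs_nonneg x) (by norm_num)
      linarith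
    rcases le_abs.mp habs with h | h
    · exact Finset.mem_union_left _ (by
        simp only [Finset.mem_filter, Finset.mem_univ, true_and]; exact h)
    · refine Finset.mem_union_right _ (by
        simp only [Finset.mem_filter, Finset.mem_univ, true_and]
        have : ∑ i, (if ε i then (-a) i else -((-a) i)) = -x := by
          rw [hx, ← Finset.sum_neg_distrib]
          refine Finset.sum_congr rfl fun i _ => ?_
          by_cases hi : ε i <;> simp [hi]
        rw [this]; exact h)
  have h1 := count_one_sided n a θ b hθ
  have h2 := count_one_sided n (-a) θ b hθ
  rw [hQ'] at h2
  calc ((Finset.univ.filter fun ε : Fin n → Bool =>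
        s * Q ≤ (∑ i, if ε i then a i else -a i) ^ 2).card : ℝ)
      ≤ (((Finset.univ.filter fun ε : Fin n → Bool =>
          b ≤ ∑ i, if ε i then a i else -a i)
        ∪ (Finset.univ.filter fun ε : Fin n → Bool =>
          b ≤ ∑ i, if ε i then (-a) i else -((-a) i))).card : ℝ) := by
        exact_mod_cast Nat.cast_le.mpr (Finset.card_le_card hsub)
    _ ≤ (((Finset.univ.filter fun ε : Fin n → Bool =>
          b ≤ ∑ i, if ε i then a i else -a i).card : ℝ)
        + ((Finset.univ.filter fun ε : Fin n → Bool =>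
          b ≤ ∑ i, if ε i then (-a) i else -((-a) i)).card : ℝ)) := by
        exact_mod_cast Nat.cast_le.mpr (Finset.card_union_le _ _)
    _ ≤ 2 ^ n * Real.exp (θ ^ 2 * Q / 2 - θ * b)
        + 2 ^ n * Real.exp (θ ^ 2 * Q / 2 - θ * b) := add_le_add h1 h2
    _ = 2 ^ n * (2 * Real.exp (-s / 2)) := by rw [hexp]; ring

open scoped ENNReal


lemma joint_map_pi {Ω : Type*} [MeasurableSpace Ω] (μ : Measure Ω) [IsProbabilityMeasure μ]
    (n : ℕ) (Z : Fin n → Ω → ℝ) (hmeas : ∀ i, Measurable (Z i))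
    (hindep : iIndepFun Z μ) :
    Measure.map (fun ω i => Z i ω) μ = Measure.pi (fun i => Measure.map (Z i) μ) := by
  haveI : ∀ i, IsProbabilityMeasure (Measure.map (Z i) μ) :=
    fun i => Measure.isProbabilityMeasure_map (hmeas i).aemeasurable
  refine (Measure.pi_eq fun s hs => ?_).symm
  rw [Measure.map_apply (measurable_pi_lambda _ hmeas) (MeasurableSet.univ_pi hs)]
  have hpre : (fun ω i => Z i ω) ⁻¹' Set.pi Set.univ s = ⋂ i ∈ Finset.univ, Z i ⁻¹' s i := by
    ext ω; simp [Set.mem_pi]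
  rw [hpre, hindep.measure_inter_preimage_eq_mul Finset.univ (fun i _ => hs i)]
  exact Finset.prod_congr rfl fun i _ => (Measure.map_apply (hmeas i) (hs i)).symm

lemma map_flip_eq {Ω : Type*} [MeasurableSpace Ω] (μ : Measure Ω) [IsProbabilityMeasure μ]
    (n : ℕ) (Z : Fin n → Ω → ℝ) (hmeas : ∀ i, Measurable (Z i))
    (hindep : iIndepFun Z μ)
    (hsym : ∀ i, Measure.map (Z i) μ = Measure.map (fun ω => -(Z i ω)) μ)
    (ε : Fin n → Bool) :
    Measure.map (fun ω i => if ε i then Z i ω else -(Z i ω)) μ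
      = Measure.map (fun ω i => Z i ω) μ := by
  have hmeas' : ∀ i, Measurable (fun ω => if ε i then Z i ω else -(Z i ω)) := by
    intro i; cases h : ε i
    · simp only [h, Bool.false_eq_true, if_false]; exact (hmeas i).neg
    · simpa [h] using hmeas i
  have hindep' : iIndepFun
      (fun i ω => if ε i then Z i ω else -(Z i ω)) μ := by
    have := hindep.comp (fun i (x : ℝ) => if ε i then x else -x)
      (fun i => by
        cases h : ε i
        · simp only [h, Bool.false_eq_true, if_false]; exact measurable_neg
        · simp only [h, if_true]; exact measurable_id)
    exact this
  have hlaw : ∀ i, Measure.map (fun ω => if ε i then Z i ω else -(Z i ω)) μ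
      = Measure.map (Z i) μ := by
    intro i; cases h : ε i
    · simp only [h, Bool.false_eq_true, if_false]; exact (hsym i).symm
    · simp [h]
  rw [joint_map_pi μ n _ hmeas' hindep', joint_map_pi μ n Z hmeas hindep]
  exact congrArg Measure.pi (funext hlaw)


open scoped ENNReal


/-- tail bound for the Student T-statistic of independent symmetric
mean-zero random variables. -/
theorem stmt_4 {Ω : Type*} [MeasurableSpace Ω] (μ : Measure Ω) [IsProbabilityMeasure μ]
    (n : ℕ) (hn : 2 ≤ n) (Z : Fin n → Ω → ℝ)
    (hmeas : ∀ i, Measurable (Z i))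
    (hindep : iIndepFun Z μ)
    (hsym : ∀ i, Measure.map (Z i) μ = Measure.map (fun ω => -(Z i ω)) μ)
    (hint : ∀ i, Integrable (Z i) μ)
    (hmean : ∀ i, ∫ ω, Z i ω ∂μ = 0)
    (μhat : Ω → ℝ) (hμ : ∀ ω, μhat ω = (1 / (n : ℝ)) * ∑ i, Z i ω)
    (σhatsq : Ω → ℝ)
    (hσ : ∀ ω, σhatsq ω = (1 / ((n : ℝ) - 1)) * ∑ i, (Z i ω - μhat ω) ^ 2)
    (T : Ω → ℝ) (hT : ∀ ω, T ω = μhat ω / (Real.sqrt (σhatsq ω) / Real.sqrt n))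
    (t : ℝ) (ht : 0 < t) :
    (μ {ω | 0 < σhatsq ω ∧ t ^ 2 ≤ (T ω) ^ 2}).toReal
      ≤ 2 * Real.exp (-(1 / 2) * t ^ 2 / (1 + t ^ 2 / ((n : ℝ) - 1))) := by
  classical
  have hN : (2 : ℝ) ≤ (n : ℝ) := by exact_mod_cast hn
  set N : ℝ := (n : ℝ) with hNdef
  have hN1 : (0 : ℝ) < N - 1 := by linarith
  have hN0 : (0 : ℝ) < N := by linarith
  set s : ℝ := (N - 1) * t ^ 2 / ((N - 1) + t ^ 2) with hs_def
  have hden : (0 : ℝ) < (N - 1) + t ^ 2 := by nlinarith [sq_nonneg t]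
  have hs : 0 < s := div_pos (by nlinarith [sq_nonneg t]) hden
  have hrhs : Real.exp (-(1 / 2) * t ^ 2 / (1 + t ^ 2 / (N - 1))) = Real.exp (-s / 2) := by
    congr 1
    rw [hs_def]
    field_simp
  -- the joint map and target set
  set g : Ω → (Fin n → ℝ) := fun ω i => Z i ω with hg
  have hgmeas : Measurable g := measurable_pi_lambda _ hmeas
  set A : Set (Fin n → ℝ) :=
    {x | 0 < ∑ i, (x i) ^ 2 ∧ s * ∑ i, (x i) ^ 2 ≤ (∑ i, x i) ^ 2} with hA
  have hQmeas : Measurable fun x : Fin n → ℝ => ∑ i, (x i) ^ 2 :=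
    Finset.measurable_sum _ fun i _ => (measurable_pi_apply i).pow_const 2
  have hSmeas : Measurable fun x : Fin n → ℝ => ∑ i, x i :=
    Finset.measurable_sum _ fun i _ => measurable_pi_apply i
  have hAmeas : MeasurableSet A := by
    exact (measurableSet_lt measurable_const hQmeas).inter
      (measurableSet_le (hQmeas.const_mul s) (hSmeas.pow_const 2))
  -- algebraic inclusion
  have hincl : {ω | 0 < σhatsq ω ∧ t ^ 2 ≤ (T ω) ^ 2} ⊆ g ⁻¹' A := by
    rintro ω ⟨hσpos, hTt⟩
    set S : ℝ := ∑ i, Z i ω with hS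
    set Q : ℝ := ∑ i, (Z i ω) ^ 2 with hQ
    have hμval : μhat ω = S / N := by rw [hμ ω, one_div, inv_mul_eq_div]
    have hsum : ∑ i, (Z i ω - μhat ω) ^ 2 = Q - S ^ 2 / N := by
      have h1 : ∑ i, (Z i ω - μhat ω) ^ 2
          = ∑ i, ((Z i ω) ^ 2 - 2 * μhat ω * Z i ω + μhat ω ^ 2) :=
        Finset.sum_congr rfl fun i _ => by ring
      rw [h1, Finset.sum_add_distrib, Finset.sum_sub_distrib, ← Finset.mul_sum,
        Finset.sum_const, Finset.card_univ, Fintype.card_fin, hμval, ← hS, ← hQ]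
      have hNne : N ≠ 0 := ne_of_gt hN0
      rw [nsmul_eq_mul, ← hNdef]
      field_simp
      ring
    have hσval : (N - 1) * σhatsq ω = Q - S ^ 2 / N := by
      rw [hσ ω, hsum]
      field_simp
    have hQS : 0 < Q - S ^ 2 / N := hσval ▸ mul_pos hN1 hσpos
    have hQpos : 0 < Q := by nlinarith [div_nonneg (sq_nonneg S) hN0.le]
    have hT2 : (T ω) ^ 2 = μhat ω ^ 2 / (σhatsq ω / N) := by
      rw [hT ω, div_pow, div_pow, Real.sq_sqrt hσpos.le, Real.sq_sqrt (Nat.cast_nonneg n)]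
    have hσN : 0 < σhatsq ω / N := div_pos hσpos hN0
    have ht2 : t ^ 2 * (σhatsq ω / N) ≤ μhat ω ^ 2 := by
      rw [hT2] at hTt
      exact (le_div_iff₀ hσN).mp hTt
    have hμ2 : μhat ω ^ 2 = S ^ 2 / N ^ 2 := by rw [hμval, div_pow]
    have hNne : N ≠ 0 := ne_of_gt hN0
    have h3 : t ^ 2 * σhatsq ω * N ≤ S ^ 2 := by
      rw [hμ2] at ht2
      have h4 := mul_le_mul_of_nonneg_left ht2 (by positivity : (0:ℝ) ≤ N ^ 2)
      calc t ^ 2 * σhatsq ω * N = N ^ 2 * (t ^ 2 * (σhatsq ω / N)) := by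
            field_simp
        _ ≤ N ^ 2 * (S ^ 2 / N ^ 2) := h4
        _ = S ^ 2 := by field_simp
    have h5 : (N - 1) * σhatsq ω * N = Q * N - S ^ 2 := by
      rw [hσval]; field_simp
    have h6 : t ^ 2 * (Q * N - S ^ 2) ≤ (N - 1) * S ^ 2 := by
      rw [← h5]
      calc t ^ 2 * ((N - 1) * σhatsq ω * N) = (N - 1) * (t ^ 2 * σhatsq ω * N) := by ring
        _ ≤ (N - 1) * S ^ 2 := mul_le_mul_of_nonneg_left h3 hN1.le
    have hkey : s * Q ≤ S ^ 2 := by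
      rw [hs_def, div_mul_eq_mul_div, div_le_iff₀ hden]
      linarith [h6, mul_nonneg (sq_nonneg t) hQpos.le]
    exact ⟨hQpos, hkey⟩
  -- probability transport
  set ν : Measure (Fin n → ℝ) := Measure.map g μ with hν
  haveI : IsProbabilityMeasure ν := Measure.isProbabilityMeasure_map hgmeas.aemeasurable
  have hmono : μ {ω | 0 < σhatsq ω ∧ t ^ 2 ≤ (T ω) ^ 2} ≤ ν A := by
    rw [hν, Measure.map_apply hgmeas hAmeas]
    exact measure_mono hincl
  -- sign flips
  set flip : (Fin n → Bool) → (Fin n → ℝ) → (Fin n → ℝ) :=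
    fun ε x i => if ε i then x i else -(x i) with hflipdef
  have hflipmeas : ∀ ε, Measurable (flip ε) := by
    intro ε
    refine measurable_pi_lambda _ fun i => ?_
    by_cases h : ε i = true
    · simp only [hflipdef, h, if_true]; exact measurable_pi_apply i
    · simp only [hflipdef, h, if_false]; exact (measurable_pi_apply i).neg
  have hflipinv : ∀ ε, ν (flip ε ⁻¹' A) = ν A := by
    intro ε
    rw [hν, ← Measure.map_apply (hflipmeas ε) hAmeas, Measure.map_map (hflipmeas ε) hgmeas]
    have hc : flip ε ∘ g = fun ω i => if ε i then Z i ω else -(Z i ω) := rfl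
    rw [hc, map_flip_eq μ n Z hmeas hindep hsym ε]
  -- average over sign flips
  have hcard : (Fintype.card (Fin n → Bool)) = 2 ^ n := by
    simp [Fintype.card_fun]
  have hsum2 : ∑ ε : Fin n → Bool, ν (flip ε ⁻¹' A) = (2 ^ n : ℝ≥0∞) * ν A := by
    rw [Finset.sum_congr rfl fun ε _ => hflipinv ε, Finset.sum_const, Finset.card_univ,
      hcard, nsmul_eq_mul]
    norm_num
  -- pointwise count bound
  have hpoint : ∀ x : Fin n → ℝ,
      ∑ ε : Fin n → Bool, (flip ε ⁻¹' A).indicator (1 : (Fin n → ℝ) → ℝ≥0∞) x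
        ≤ ENNReal.ofReal (2 ^ n * (2 * Real.exp (-s / 2))) := by
    intro x
    have hQflip : ∀ ε : Fin n → Bool, ∑ i, (flip ε x i) ^ 2 = ∑ i, (x i) ^ 2 := by
      intro ε
      refine Finset.sum_congr rfl fun i _ => ?_
      by_cases h : ε i <;> simp [hflipdef, h]
    have hind : ∀ ε : Fin n → Bool, (flip ε ⁻¹' A).indicator (1 : (Fin n → ℝ) → ℝ≥0∞) x
        = if (0 < ∑ i, (x i) ^ 2 ∧ s * ∑ i, (x i) ^ 2 ≤ (∑ i, flip ε x i) ^ 2)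
          then 1 else 0 := by
      intro ε
      rw [Set.indicator_apply]
      congr 1
      simp only [Set.mem_preimage, hA, Set.mem_setOf_eq, hQflip ε, eq_iff_iff]
    rw [Finset.sum_congr rfl fun ε _ => hind ε, Finset.sum_boole]
    by_cases hQx : 0 < ∑ i, (x i) ^ 2
    · have hflipval : ∀ ε : Fin n → Bool, ∀ i, flip ε x i = if ε i then x i else -x i := by
        intro ε i; rfl
      have hcount := count_two_sided n x s hs hQx
      have hfe : (Finset.univ.filter fun ε : Fin n → Bool =>
            0 < ∑ i, (x i) ^ 2 ∧ s * ∑ i, (x i) ^ 2 ≤ (∑ i, flip ε x i) ^ 2)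
          = Finset.univ.filter fun ε : Fin n → Bool =>
            s * ∑ i, (x i) ^ 2 ≤ (∑ i, if ε i then x i else -x i) ^ 2 := by
        refine Finset.filter_congr fun ε _ => ?_
        simp only [hQx, true_and, hflipval]
      rw [hfe]
      calc ((Finset.univ.filter fun ε : Fin n → Bool =>
            s * ∑ i, (x i) ^ 2 ≤ (∑ i, if ε i then x i else -x i) ^ 2).card : ℝ≥0∞)
          = ENNReal.ofReal ((Finset.univ.filter fun ε : Fin n → Bool =>
            s * ∑ i, (x i) ^ 2 ≤ (∑ i, if ε i then x i else -x i) ^ 2).card : ℝ) := by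
            rw [ENNReal.ofReal_natCast]
        _ ≤ ENNReal.ofReal (2 ^ n * (2 * Real.exp (-s / 2))) :=
            ENNReal.ofReal_le_ofReal hcount
    · have : (Finset.univ.filter fun ε : Fin n → Bool =>
          0 < ∑ i, (x i) ^ 2 ∧ s * ∑ i, (x i) ^ 2 ≤ (∑ i, flip ε x i) ^ 2) = ∅ := by
        refine Finset.filter_false_of_mem fun ε _ => ?_
        rintro ⟨h1, -⟩
        exact hQx h1
      rw [this]
      simp
  -- combine
  have hmain : (2 ^ n : ℝ≥0∞) * ν A
      ≤ (2 ^ n : ℝ≥0∞) * ENNReal.ofReal (2 * Real.exp (-s / 2)) := by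
    rw [← hsum2]
    calc ∑ ε : Fin n → Bool, ν (flip ε ⁻¹' A)
        = ∑ ε : Fin n → Bool, ∫⁻ x, (flip ε ⁻¹' A).indicator (1 : (Fin n → ℝ) → ℝ≥0∞) x ∂ν := by
          exact Finset.sum_congr rfl fun ε _ =>
            (lintegral_indicator_one ((hflipmeas ε) hAmeas)).symm
      _ = ∫⁻ x, ∑ ε : Fin n → Bool, (flip ε ⁻¹' A).indicator (1 : (Fin n → ℝ) → ℝ≥0∞) x ∂ν := by
          rw [lintegral_finset_sum]
          exact fun ε _ => measurable_const.indicator ((hflipmeas ε) hAmeas)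
      _ ≤ ∫⁻ _, ENNReal.ofReal (2 ^ n * (2 * Real.exp (-s / 2))) ∂ν :=
          lintegral_mono fun x => hpoint x
      _ = ENNReal.ofReal (2 ^ n * (2 * Real.exp (-s / 2))) := by
          rw [lintegral_const, measure_univ, mul_one]
      _ = (2 ^ n : ℝ≥0∞) * ENNReal.ofReal (2 * Real.exp (-s / 2)) := by
          rw [ENNReal.ofReal_mul (by positivity)]
          congr 1
          rw [ENNReal.ofReal_pow (by norm_num : (0:ℝ) ≤ 2), ENNReal.ofReal_ofNat]
  have hνA : ν A ≤ ENNReal.ofReal (2 * Real.exp (-s / 2)) := by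
    have h2n : (2 ^ n : ℝ≥0∞) ≠ 0 := by positivity
    have h2ntop : (2 ^ n : ℝ≥0∞) ≠ ⊤ := by
      exact ENNReal.pow_ne_top (by norm_num)
    exact (ENNReal.mul_le_mul_iff_right h2n h2ntop).mp hmain
  have hfinal : μ {ω | 0 < σhatsq ω ∧ t ^ 2 ≤ (T ω) ^ 2}
      ≤ ENNReal.ofReal (2 * Real.exp (-s / 2)) := hmono.trans hνA
  have := ENNReal.toReal_mono (by exact ENNReal.ofReal_ne_top) hfinal
  rw [ENNReal.toReal_ofReal (by positivity)] at this
  rw [show -(1 / 2) * t ^ 2 / (1 + t ^ 2 / ((n:ℝ) - 1))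
    = -(1 / 2) * t ^ 2 / (1 + t ^ 2 / (N - 1)) from rfl, hrhs]
  exact this
end

section
/- Let F be a finite index set of size m, and for each i ∈ F let Z^{(i)}_1,...,Z^{(i)}_n be independent symmetric mean-zero random variables (n ≥ 2). Let δ ∈ (0,1) and assume m ≤ (δ/2)·e^{n/8}. Then with probability at least 1 − δ, simultaneously for all i ∈ F: |μ̂_i| ≤ (σ̂_i/√n)·√(4 log(2m/δ)), where μ̂_i and σ̂_i are the sample mean and unbiased sample standard deviation of Z^{(i)}_1,...,Z^{(i)}_n. -/
open MeasureTheory ProbabilityTheory Finset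
open scoped ENNReal NNReal

noncomputable def rsgn (b : Bool) : ℝ := if b then 1 else -1

lemma rsgn_sq (b : Bool) : rsgn b ^ 2 = 1 := by cases b <;> simp [rsgn]

@[simp] lemma rsgn_true : rsgn true = 1 := rfl

@[simp] lemma rsgn_false : rsgn false = -1 := rfl

lemma count_onesided {n : ℕ} (z : Fin n → ℝ) (s : ℝ) (hs : 0 ≤ s) :
    ((Finset.univ.filter (fun ε : Fin n → Bool =>
      s * Real.sqrt (∑ k, z k ^ 2) < ∑ k, rsgn (ε k) * z k)).card : ℝ)
      ≤ Real.exp (-(s ^ 2) / 2) * 2 ^ n := by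
  set Q := ∑ k, z k ^ 2 with hQdef
  have hQ0 : 0 ≤ Q := Finset.sum_nonneg fun k _ => sq_nonneg _
  rcases hQ0.eq_or_lt with hQ | hQ
  · have hz : ∀ k, z k = 0 := by
      intro k
      have := (Finset.sum_eq_zero_iff_of_nonneg (fun k _ => sq_nonneg (z k))).mp hQ.symm k
        (Finset.mem_univ k)
      exact pow_eq_zero_iff (n := 2) (by norm_num) |>.mp this
    have he : (Finset.univ.filter (fun ε : Fin n → Bool =>
        s * Real.sqrt Q < ∑ k, rsgn (ε k) * z k)) = ∅ := by
      apply Finset.filter_eq_empty_iff.mpr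
      intro ε _
      simp [hz, ← hQ, Real.sqrt_zero, mul_zero, not_lt, le_refl]
    rw [he]
    simp only [Finset.card_empty, Nat.cast_zero]
    positivity
  · set l := s / Real.sqrt Q with hl
    have hsQ : (0:ℝ) < Real.sqrt Q := Real.sqrt_pos.mpr hQ
    have hl0 : 0 ≤ l := div_nonneg hs hsQ.le
    set T : (Fin n → Bool) → ℝ := fun ε => ∑ k, rsgn (ε k) * z k with hT
    set Fl := Finset.univ.filter (fun ε : Fin n → Bool => s * Real.sqrt Q < T ε) with hFl
    have key : (Fl.card : ℝ) * Real.exp (l * (s * Real.sqrt Q))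
        ≤ ∑ ε : Fin n → Bool, Real.exp (l * T ε) := by
      calc (Fl.card : ℝ) * Real.exp (l * (s * Real.sqrt Q))
          = ∑ _ε ∈ Fl, Real.exp (l * (s * Real.sqrt Q)) := by rw [Finset.sum_const, nsmul_eq_mul]
        _ ≤ ∑ ε ∈ Fl, Real.exp (l * T ε) := by
            apply Finset.sum_le_sum
            intro ε hε
            have := (Finset.mem_filter.mp hε).2
            exact Real.exp_le_exp.mpr (mul_le_mul_of_nonneg_left this.le hl0)
        _ ≤ ∑ ε : Fin n → Bool, Real.exp (l * T ε) :=
            Finset.sum_le_sum_of_subset_of_nonneg (Finset.subset_univ _)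
              (fun _ _ _ => (Real.exp_pos _).le)
    have prodcalc : ∑ ε : Fin n → Bool, Real.exp (l * T ε)
        ≤ 2 ^ n * Real.exp (l ^ 2 * Q / 2) := by
      have e1 : ∀ ε : Fin n → Bool, Real.exp (l * T ε)
          = ∏ k, Real.exp (l * (rsgn (ε k) * z k)) := by
        intro ε
        rw [← Real.exp_sum, hT]
        simp [Finset.mul_sum]
      have eprod : ∏ k : Fin n, Real.exp ((l * z k) ^ 2 / 2) = Real.exp (l ^ 2 * Q / 2) := by
        rw [← Real.exp_sum]
        congr 1
        rw [hQdef, Finset.mul_sum, ← Finset.sum_div]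
        congr 1
        exact Finset.sum_congr rfl fun k _ => by ring
      calc ∑ ε : Fin n → Bool, Real.exp (l * T ε)
          = ∑ ε : Fin n → Bool, ∏ k, Real.exp (l * (rsgn (ε k) * z k)) :=
            Finset.sum_congr rfl fun ε _ => e1 ε
        _ = ∏ k : Fin n, ∑ b : Bool, Real.exp (l * (rsgn b * z k)) := by
            rw [Finset.prod_univ_sum, Fintype.piFinset_univ]
        _ ≤ ∏ k : Fin n, 2 * Real.exp ((l * z k) ^ 2 / 2) := by
            apply Finset.prod_le_prod
            · intro k _
              exact Finset.sum_nonneg fun b _ => (Real.exp_pos _).le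
            · intro k _
              have hb : ∑ b : Bool, Real.exp (l * (rsgn b * z k))
                  = 2 * Real.cosh (l * z k) := by
                rw [Fintype.sum_bool, Real.cosh_eq]
                simp only [rsgn_true, rsgn_false, one_mul]
                rw [show l * (-1 * z k) = -(l * z k) by ring]
                ring
              rw [hb]
              have := Real.cosh_le_exp_half_sq (l * z k)
              nlinarith [Real.cosh_pos (l * z k)]
        _ = 2 ^ n * Real.exp (l ^ 2 * Q / 2) := by
            rw [Finset.prod_mul_distrib, Finset.prod_const, eprod]
            norm_num [Finset.card_univ]
    have hlq : l ^ 2 * Q = s ^ 2 := by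
      rw [hl, div_pow, Real.sq_sqrt hQ0]
      field_simp
    have hlsq : l * (s * Real.sqrt Q) = s ^ 2 := by
      rw [hl]
      field_simp
    rw [hlsq] at key
    rw [show l ^ 2 * Q / 2 = s ^ 2 / 2 by rw [hlq]] at prodcalc
    have h4 : (Fl.card : ℝ) ≤ 2 ^ n * Real.exp (s ^ 2 / 2) / Real.exp (s ^ 2) :=
      (le_div_iff₀ (Real.exp_pos _)).mpr (key.trans prodcalc)
    have h5 : (2:ℝ) ^ n * Real.exp (s ^ 2 / 2) / Real.exp (s ^ 2)
        = Real.exp (-(s ^ 2) / 2) * 2 ^ n := by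
      rw [mul_div_assoc, ← Real.exp_sub, show s ^ 2 / 2 - s ^ 2 = -(s ^ 2) / 2 by ring, mul_comm]
    exact h5 ▸ h4

lemma count_twosided {n : ℕ} (z : Fin n → ℝ) (s : ℝ) (hs : 0 ≤ s) :
    ((Finset.univ.filter (fun ε : Fin n → Bool =>
      s ^ 2 * (∑ k, z k ^ 2) < (∑ k, rsgn (ε k) * z k) ^ 2)).card : ℝ)
      ≤ 2 * Real.exp (-(s ^ 2) / 2) * 2 ^ n := by
  set Q := ∑ k, z k ^ 2 with hQdef
  have hQ0 : 0 ≤ Q := Finset.sum_nonneg fun k _ => sq_nonneg _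
  have hsub : (Finset.univ.filter (fun ε : Fin n → Bool =>
        s ^ 2 * Q < (∑ k, rsgn (ε k) * z k) ^ 2))
      ⊆ (Finset.univ.filter (fun ε : Fin n → Bool =>
        s * Real.sqrt (∑ k, z k ^ 2) < ∑ k, rsgn (ε k) * z k))
      ∪ (Finset.univ.filter (fun ε : Fin n → Bool =>
        s * Real.sqrt (∑ k, (-z) k ^ 2) < ∑ k, rsgn (ε k) * (-z) k)) := by
    intro ε hε
    have h := (Finset.mem_filter.mp hε).2
    set T := ∑ k, rsgn (ε k) * z k with hTdef
    have ha : 0 ≤ s * Real.sqrt Q := mul_nonneg hs (Real.sqrt_nonneg _)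
    have hsq : (s * Real.sqrt Q) ^ 2 = s ^ 2 * Q := by
      rw [mul_pow, Real.sq_sqrt hQ0]
    have habs : s * Real.sqrt Q < |T| := by
      by_contra hc
      push_neg at hc
      have := sq_le_sq' (neg_le_of_neg_le (by nlinarith [abs_nonneg T, neg_abs_le T])) hc
      nlinarith [sq_abs T, abs_nonneg T, neg_abs_le T, le_abs_self T]
    rcases le_or_gt 0 T with hT | hT
    · apply Finset.mem_union_left
      rw [Finset.mem_filter]
      refine ⟨Finset.mem_univ _, ?_⟩
      rwa [abs_of_nonneg hT] at habs
    · apply Finset.mem_union_right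
      rw [Finset.mem_filter]
      refine ⟨Finset.mem_univ _, ?_⟩
      have e1 : ∑ k, (-z) k ^ 2 = Q := by simp [hQdef]
      have e2 : ∑ k, rsgn (ε k) * (-z) k = -T := by
        rw [hTdef, ← Finset.sum_neg_distrib]
        exact Finset.sum_congr rfl fun k _ => by simp [mul_neg]
      rw [e1, e2]
      rwa [abs_of_neg hT] at habs
  calc ((Finset.univ.filter (fun ε : Fin n → Bool =>
        s ^ 2 * Q < (∑ k, rsgn (ε k) * z k) ^ 2)).card : ℝ)
      ≤ (((Finset.univ.filter (fun ε : Fin n → Bool =>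
          s * Real.sqrt (∑ k, z k ^ 2) < ∑ k, rsgn (ε k) * z k))
        ∪ (Finset.univ.filter (fun ε : Fin n → Bool =>
          s * Real.sqrt (∑ k, (-z) k ^ 2) < ∑ k, rsgn (ε k) * (-z) k))).card : ℝ) := by
        exact_mod_cast Nat.cast_le.mpr (Finset.card_le_card hsub)
    _ ≤ ((Finset.univ.filter (fun ε : Fin n → Bool =>
          s * Real.sqrt (∑ k, z k ^ 2) < ∑ k, rsgn (ε k) * z k)).card : ℝ)
        + ((Finset.univ.filter (fun ε : Fin n → Bool =>
          s * Real.sqrt (∑ k, (-z) k ^ 2) < ∑ k, rsgn (ε k) * (-z) k)).card : ℝ) := by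
        exact_mod_cast Nat.cast_le.mpr (Finset.card_union_le _ _)
    _ ≤ Real.exp (-(s ^ 2) / 2) * 2 ^ n + Real.exp (-(s ^ 2) / 2) * 2 ^ n :=
        add_le_add (count_onesided z s hs) (count_onesided (-z) s hs)
    _ = 2 * Real.exp (-(s ^ 2) / 2) * 2 ^ n := by ring

lemma joint_map_eq_pi {Ω : Type*} [MeasurableSpace Ω] (μ : Measure Ω) [IsProbabilityMeasure μ]
    {n : ℕ} (X : Fin n → Ω → ℝ) (hX : ∀ k, Measurable (X k))
    (h : iIndepFun X μ) :
    Measure.map (fun ω k => X k ω) μ = Measure.pi (fun k => Measure.map (X k) μ) := by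
  haveI : ∀ k, IsProbabilityMeasure (Measure.map (X k) μ) :=
    fun k => Measure.isProbabilityMeasure_map (hX k).aemeasurable
  refine (Measure.pi_eq (μ := fun k => Measure.map (X k) μ) fun s hs => ?_).symm
  rw [Measure.map_apply (measurable_pi_lambda _ hX) (MeasurableSet.univ_pi hs)]
  have hpre : (fun ω k => X k ω) ⁻¹' Set.pi Set.univ s = ⋂ k ∈ Finset.univ, X k ⁻¹' s k := by
    ext ω; simp [Set.mem_pi]
  rw [hpre, h.measure_inter_preimage_eq_mul Finset.univ (fun k _ => hs k)]
  exact Finset.prod_congr rfl fun k _ =>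
    (Measure.map_apply (hX k) (hs k)).symm

lemma per_bound {Ω : Type*} [MeasurableSpace Ω] (μ : Measure Ω) [IsProbabilityMeasure μ]
    {n : ℕ} (X : Fin n → Ω → ℝ) (hX : ∀ k, Measurable (X k))
    (hindep : iIndepFun X μ)
    (hsym : ∀ k, Measure.map (X k) μ = Measure.map (fun ω => -(X k ω)) μ)
    (s : ℝ) (hs : 0 ≤ s) :
    μ {ω | s ^ 2 * ∑ k, (X k ω) ^ 2 < (∑ k, X k ω) ^ 2}
      ≤ ENNReal.ofReal (2 * Real.exp (-(s ^ 2) / 2)) := by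
  classical
  -- the sets B ε in the path space
  set B : (Fin n → Bool) → Set (Fin n → ℝ) :=
    fun ε => {v | s ^ 2 * ∑ k, (v k) ^ 2 < (∑ k, rsgn (ε k) * v k) ^ 2} with hB
  have hBmeas : ∀ ε, MeasurableSet (B ε) := by
    intro ε
    apply measurableSet_lt
    · exact (Finset.measurable_sum _ fun k _ =>
        ((measurable_pi_apply k).pow_const 2)).const_mul _
    · exact (Finset.measurable_sum _ fun k _ =>
        (measurable_pi_apply k).const_mul _).pow_const 2
  -- law invariance under sign flips
  have hlaw : ∀ ε : Fin n → Bool,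
      Measure.map (fun ω k => rsgn (ε k) * X k ω) μ = Measure.map (fun ω k => X k ω) μ := by
    intro ε
    have hY : ∀ k, Measurable (fun ω => rsgn (ε k) * X k ω) :=
      fun k => (hX k).const_mul _
    have hYindep : iIndepFun (fun k ω => rsgn (ε k) * X k ω) μ :=
      hindep.comp (fun k x => rsgn (ε k) * x) (fun k => measurable_const_mul _)
    rw [joint_map_eq_pi μ _ hY hYindep, joint_map_eq_pi μ X hX hindep]
    refine congrArg Measure.pi (funext fun k => ?_)
    cases hεk : ε k
    · simp only [rsgn_false]
      rw [hsym k]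
      congr 1
      funext ω
      ring
    · simp only [rsgn_true, one_mul]
  have hjm : Measurable (fun ω k => X k ω) := measurable_pi_lambda _ hX
  set A : (Fin n → Bool) → Set Ω := fun ε => (fun ω k => X k ω) ⁻¹' B ε with hAdef
  have hAmeas : ∀ ε, MeasurableSet (A ε) := fun ε => hjm (hBmeas ε)
  -- the target event has the same measure as each A ε
  have hA : ∀ ε : Fin n → Bool,
      μ {ω | s ^ 2 * ∑ k, (X k ω) ^ 2 < (∑ k, X k ω) ^ 2} = μ (A ε) := by
    intro ε
    have hflip : Measurable (fun ω k => rsgn (ε k) * X k ω) :=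
      measurable_pi_lambda _ fun k => (hX k).const_mul _
    have hset : {ω | s ^ 2 * ∑ k, (X k ω) ^ 2 < (∑ k, X k ω) ^ 2}
        = (fun ω k => rsgn (ε k) * X k ω) ⁻¹' B ε := by
      ext ω
      have e1 : ∑ k, (rsgn (ε k) * X k ω) ^ 2 = ∑ k, (X k ω) ^ 2 :=
        Finset.sum_congr rfl fun k _ => by rw [mul_pow, rsgn_sq, one_mul]
      have e2 : ∑ k, rsgn (ε k) * (rsgn (ε k) * X k ω) = ∑ k, X k ω :=
        Finset.sum_congr rfl fun k _ => by rw [← mul_assoc, ← sq, rsgn_sq, one_mul]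
      simp only [Set.mem_preimage, hB, Set.mem_setOf_eq, e1, e2]
    rw [hset, ← Measure.map_apply hflip (hBmeas ε), hlaw ε,
      Measure.map_apply hjm (hBmeas ε)]
  -- averaging over sign flips
  have hcount : ∀ ω, ∑ ε : Fin n → Bool, (A ε).indicator (1 : Ω → ℝ≥0∞) ω
      ≤ ENNReal.ofReal (2 * Real.exp (-(s ^ 2) / 2) * 2 ^ n) := by
    intro ω
    have e3 : ∑ ε : Fin n → Bool, (A ε).indicator (1 : Ω → ℝ≥0∞) ω
        = ((Finset.univ.filter (fun ε : Fin n → Bool => ω ∈ A ε)).card : ℝ≥0∞) := by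
      rw [Finset.card_filter]
      push_cast
      refine Finset.sum_congr rfl fun ε _ => ?_
      by_cases h : ω ∈ A ε <;> simp [Set.indicator_apply, h]
    rw [e3]
    have e4 : (Finset.univ.filter (fun ε : Fin n → Bool => ω ∈ A ε))
        = (Finset.univ.filter (fun ε : Fin n → Bool =>
            s ^ 2 * (∑ k, (X k ω) ^ 2) < (∑ k, rsgn (ε k) * X k ω) ^ 2)) := by
      refine Finset.filter_congr fun ε _ => ?_
      simp [hAdef, hB, Set.mem_preimage, Set.mem_setOf_eq]
    rw [e4, ← ENNReal.ofReal_natCast]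
    exact ENNReal.ofReal_le_ofReal (count_twosided (fun k => X k ω) s hs)
  have hsum : ∑ ε : Fin n → Bool, μ (A ε)
      ≤ ENNReal.ofReal (2 * Real.exp (-(s ^ 2) / 2) * 2 ^ n) := by
    calc ∑ ε : Fin n → Bool, μ (A ε)
        = ∑ ε : Fin n → Bool, ∫⁻ ω, (A ε).indicator (1 : Ω → ℝ≥0∞) ω ∂μ := by
          exact Finset.sum_congr rfl fun ε _ => (lintegral_indicator_one (hAmeas ε)).symm
      _ = ∫⁻ ω, ∑ ε : Fin n → Bool, (A ε).indicator (1 : Ω → ℝ≥0∞) ω ∂μ := by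
          rw [lintegral_finset_sum]
          exact fun ε _ => measurable_one.indicator (hAmeas ε)
      _ ≤ ∫⁻ _ω, ENNReal.ofReal (2 * Real.exp (-(s ^ 2) / 2) * 2 ^ n) ∂μ :=
          lintegral_mono hcount
      _ = ENNReal.ofReal (2 * Real.exp (-(s ^ 2) / 2) * 2 ^ n) := by
          rw [lintegral_const, measure_univ, mul_one]
  have hconst : ∑ ε : Fin n → Bool, μ (A ε)
      = (2 ^ n : ℝ≥0∞) * μ {ω | s ^ 2 * ∑ k, (X k ω) ^ 2 < (∑ k, X k ω) ^ 2} := by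
    rw [Finset.sum_congr rfl fun ε _ => (hA ε).symm, Finset.sum_const, nsmul_eq_mul]
    congr 1
    simp [Finset.card_univ]
  rw [hconst] at hsum
  have hofr : ENNReal.ofReal (2 * Real.exp (-(s ^ 2) / 2) * 2 ^ n)
      = (2 ^ n : ℝ≥0∞) * ENNReal.ofReal (2 * Real.exp (-(s ^ 2) / 2)) := by
    rw [ENNReal.ofReal_mul (by positivity), mul_comm]
    congr 1
    rw [ENNReal.ofReal_pow (by norm_num : (0:ℝ) ≤ 2), ENNReal.ofReal_ofNat]
  rw [hofr] at hsum
  exact (ENNReal.mul_le_mul_iff_right (by positivity) (by simp)).mp hsum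
lemma alg_step {N t2 Q S : ℝ} (hN : 2 ≤ N) (ht2 : 0 < t2)
    (h : 1 / (N - 1) * (Q - 1 / N * S ^ 2) / N * t2 < (1 / N * S) ^ 2) :
    N * t2 * Q < S ^ 2 * (N - 1 + t2) := by
  have hN0 : (0:ℝ) < N := by linarith
  have hN1 : (0:ℝ) < N - 1 := by linarith
  have hne : N ≠ 0 := hN0.ne'
  have hne1 : N - 1 ≠ 0 := hN1.ne'
  have h2 : (Q - 1 / N * S ^ 2) * t2 / ((N - 1) * N) < S ^ 2 / N ^ 2 := by
    have e1 : 1 / (N - 1) * (Q - 1 / N * S ^ 2) / N * t2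
        = (Q - 1 / N * S ^ 2) * t2 / ((N - 1) * N) := by
      field_simp
      try exact Or.inl trivial
    have e2 : (1 / N * S) ^ 2 = S ^ 2 / N ^ 2 := by
      rw [mul_pow, one_div, inv_pow]
      rw [inv_mul_eq_div]
    rw [e1, e2] at h
    exact h
  rw [div_lt_div_iff₀ (by positivity) (by positivity)] at h2
  have h4 : (Q - 1 / N * S ^ 2) * t2 * N ^ 2 = (Q * N - S ^ 2) * (t2 * N) := by
    field_simp
  rw [h4] at h2
  nlinarith [h2, hN0, ht2]


/-- uniform T-statistic confidence bound over a feature set F of size m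
with m ≤ (δ/2)·e^{n/8}. -/
theorem stmt_6 {Ω : Type*} [MeasurableSpace Ω] (μ : Measure Ω) [IsProbabilityMeasure μ]
    {F : Type*} [Fintype F] (m : ℕ) (hmcard : Fintype.card F = m) (hm : 0 < m)
    (n : ℕ) (hn : 2 ≤ n) (Z : F → Fin n → Ω → ℝ)
    (hmeas : ∀ i k, Measurable (Z i k))
    (hindep : ∀ i, iIndepFun (Z i) μ)
    (hsym : ∀ i k, Measure.map (Z i k) μ = Measure.map (fun ω => -(Z i k ω)) μ)
    (hint : ∀ i k, Integrable (Z i k) μ)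
    (hmean : ∀ i k, ∫ ω, Z i k ω ∂μ = 0)
    (μhat : F → Ω → ℝ) (hμ : ∀ i ω, μhat i ω = (1 / (n : ℝ)) * ∑ k, Z i k ω)
    (σhat : F → Ω → ℝ)
    (hσ : ∀ i ω, σhat i ω =
      Real.sqrt ((1 / ((n : ℝ) - 1)) * ∑ k, (Z i k ω - μhat i ω) ^ 2))
    (δ : ℝ) (hδ0 : 0 < δ) (hδ1 : δ < 1)
    (hsize : (m : ℝ) ≤ (δ / 2) * Real.exp ((n : ℝ) / 8)) :
    1 - δ ≤ (μ {ω | ∀ i, |μhat i ω| ≤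
      (σhat i ω / Real.sqrt n) * Real.sqrt (4 * Real.log (2 * m / δ))}).toReal := by
  classical
  have hnR : (2:ℝ) ≤ (n:ℝ) := by exact_mod_cast hn
  have hm1 : (1:ℝ) ≤ (m:ℝ) := by exact_mod_cast hm
  have hmne : (m:ℝ) ≠ 0 := by positivity
  set L := Real.log (2 * (m:ℝ) / δ) with hLdef
  have hratio : (1:ℝ) < 2 * (m:ℝ) / δ := by
    rw [lt_div_iff₀ hδ0]
    nlinarith
  have hL0 : 0 < L := Real.log_pos hratio
  have hL8 : L ≤ (n:ℝ) / 8 := by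
    have h1 : 2 * (m:ℝ) / δ ≤ Real.exp ((n:ℝ) / 8) := by
      rw [div_le_iff₀ hδ0]
      nlinarith [hsize]
    calc L ≤ Real.log (Real.exp ((n:ℝ)/8)) :=
          Real.log_le_log (by positivity) h1
      _ = (n:ℝ)/8 := Real.log_exp _
  set t2 := 4 * L with ht2def
  have ht2pos : 0 < t2 := by positivity
  have hden : 0 < (n:ℝ) - 1 + t2 := by nlinarith
  set s2 := (n:ℝ) * t2 / ((n:ℝ) - 1 + t2) with hs2def
  have hs2pos : 0 < s2 := by
    apply div_pos (by nlinarith) hden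
  set s := Real.sqrt s2 with hsdef
  have hssq : s ^ 2 = s2 := Real.sq_sqrt hs2pos.le
  -- bad events
  set bad : F → Set Ω := fun i =>
    {ω | s ^ 2 * ∑ k, (Z i k ω) ^ 2 < (∑ k, Z i k ω) ^ 2} with hbaddef
  have hbadle : ∀ i, μ (bad i) ≤ ENNReal.ofReal (δ / m) := by
    intro i
    refine (per_bound μ (Z i) (hmeas i) (hindep i) (hsym i) s (Real.sqrt_nonneg _)).trans ?_
    apply ENNReal.ofReal_le_ofReal
    rw [hssq]
    have h1 : L ≤ s2 / 2 := by
      have h2 : 2 * L * ((n:ℝ) - 1 + t2) ≤ (n:ℝ) * t2 := by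
        rw [ht2def]
        nlinarith [mul_le_mul_of_nonneg_left hL8 hL0.le]
      rw [hs2def, le_div_iff₀ (by norm_num : (0:ℝ) < 2), le_div_iff₀ hden]
      linarith
    have h3 : Real.exp (-s2 / 2) ≤ Real.exp (-L) :=
      Real.exp_le_exp.mpr (by linarith)
    have h4 : Real.exp (-L) = δ / (2 * m) := by
      rw [Real.exp_neg, hLdef, Real.exp_log (by positivity), inv_div]
    calc 2 * Real.exp (-s2 / 2) ≤ 2 * Real.exp (-L) := by linarith
      _ = 2 * (δ / (2*m)) := by rw [h4]
      _ = δ / m := by rw [← mul_div_assoc, mul_div_mul_left δ (m:ℝ) (two_ne_zero)]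
  -- measurability
  have hμm : ∀ i, Measurable (μhat i) := by
    intro i
    have : μhat i = fun ω => (1 / (n : ℝ)) * ∑ k, Z i k ω := funext (hμ i)
    rw [this]
    exact (Finset.measurable_sum _ fun k _ => hmeas i k).const_mul _
  have hσm : ∀ i, Measurable (σhat i) := by
    intro i
    have : σhat i = fun ω =>
        Real.sqrt ((1 / ((n : ℝ) - 1)) * ∑ k, (Z i k ω - μhat i ω) ^ 2) := funext (hσ i)
    rw [this]
    exact ((Finset.measurable_sum _ fun k _ =>
      ((hmeas i k).sub (hμm i)).pow_const 2).const_mul _).sqrt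
  have hbadmeas : ∀ i, MeasurableSet (bad i) := by
    intro i
    apply measurableSet_lt
    · exact (Finset.measurable_sum _ fun k _ => (hmeas i k).pow_const 2).const_mul _
    · exact (Finset.measurable_sum _ fun k _ => hmeas i k).pow_const 2
  set good := {ω | ∀ i, |μhat i ω| ≤
      (σhat i ω / Real.sqrt n) * Real.sqrt t2} with hgooddef
  have hgoodmeas : MeasurableSet good := by
    have : good = ⋂ i, {ω | |μhat i ω| ≤ (σhat i ω / Real.sqrt n) * Real.sqrt t2} := by
      ext ω
      simp [hgooddef, Set.mem_iInter]
    rw [this]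
    exact MeasurableSet.iInter fun i =>
      measurableSet_le (hμm i).abs (((hσm i).div_const _).mul_const _)
  -- containment of the failure event
  have hsubset : goodᶜ ⊆ ⋃ i, bad i := by
    intro ω hω
    simp only [hgooddef, Set.mem_compl_iff, Set.mem_setOf_eq, not_forall] at hω
    obtain ⟨i, hi⟩ := hω
    push_neg at hi
    refine Set.mem_iUnion.mpr ⟨i, ?_⟩
    simp only [hbaddef, Set.mem_setOf_eq]
    set S := ∑ k, Z i k ω with hSdef
    set Q := ∑ k, (Z i k ω) ^ 2 with hQdef
    have hμi : μhat i ω = 1 / (n:ℝ) * S := hμ i ω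
    have hW : ∑ k, (Z i k ω - μhat i ω) ^ 2 = Q - 1 / (n:ℝ) * S ^ 2 := by
      have e : ∀ k : Fin n, (Z i k ω - μhat i ω) ^ 2
          = (Z i k ω) ^ 2 - 2 * μhat i ω * Z i k ω + μhat i ω ^ 2 := fun k => by ring
      rw [Finset.sum_congr rfl fun k _ => e k]
      rw [Finset.sum_add_distrib, Finset.sum_sub_distrib, ← Finset.mul_sum,
        Finset.sum_const, Finset.card_univ, Fintype.card_fin, nsmul_eq_mul]
      rw [hμi, ← hSdef, ← hQdef]
      have hnne : (n:ℝ) ≠ 0 := by positivity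
      field_simp
      ring
    have hσnn : 0 ≤ σhat i ω := by rw [hσ i ω]; exact Real.sqrt_nonneg _
    have hWnn : 0 ≤ (1 / ((n : ℝ) - 1)) * ∑ k, (Z i k ω - μhat i ω) ^ 2 := by
      apply mul_nonneg
      · apply div_nonneg zero_le_one
        linarith
      · exact Finset.sum_nonneg fun k _ => sq_nonneg _
    have hσ2 : σhat i ω ^ 2 = 1 / ((n:ℝ) - 1) * (Q - 1 / (n:ℝ) * S ^ 2) := by
      rw [hσ i ω, Real.sq_sqrt hWnn, hW]
    have hnn : 0 ≤ (σhat i ω / Real.sqrt n) * Real.sqrt t2 :=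
      mul_nonneg (div_nonneg hσnn (Real.sqrt_nonneg _)) (Real.sqrt_nonneg _)
    have hsq : ((σhat i ω / Real.sqrt n) * Real.sqrt t2) ^ 2 < μhat i ω ^ 2 := by
      have h' := mul_self_lt_mul_self hnn hi
      rw [abs_mul_abs_self] at h'
      rw [pow_two, pow_two]
      exact h'
    have hc2 : ((σhat i ω / Real.sqrt n) * Real.sqrt t2) ^ 2
        = σhat i ω ^ 2 / (n:ℝ) * t2 := by
      rw [mul_pow, div_pow, Real.sq_sqrt ht2pos.le,
        Real.sq_sqrt (by positivity : (0:ℝ) ≤ (n:ℝ))]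
    rw [hc2, hσ2, hμi] at hsq
    have key := alg_step hnR ht2pos hsq
    rw [hssq, hs2def, div_mul_eq_mul_div, div_lt_iff₀ hden]
    linarith [key]
  -- union bound
  have hcompl : μ goodᶜ ≤ ENNReal.ofReal δ := by
    refine le_trans (measure_mono hsubset) ?_
    refine le_trans (measure_iUnion_fintype_le μ bad) ?_
    calc ∑ i, μ (bad i) ≤ ∑ _i : F, ENNReal.ofReal (δ / m) :=
          Finset.sum_le_sum fun i _ => hbadle i
      _ = (Fintype.card F : ℝ≥0∞) * ENNReal.ofReal (δ / m) := by
          rw [Finset.sum_const, nsmul_eq_mul, Finset.card_univ]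
      _ = ENNReal.ofReal δ := by
          rw [hmcard, ← ENNReal.ofReal_natCast m,
            ← ENNReal.ofReal_mul (Nat.cast_nonneg m)]
          congr 1
          field_simp
  -- conclude
  have h5 : μ good = 1 - μ goodᶜ := by
    have := prob_compl_eq_one_sub (μ := μ) hgoodmeas.compl
    rw [compl_compl] at this
    exact this
  have h6 : (μ goodᶜ).toReal ≤ δ :=
    ENNReal.toReal_le_of_le_ofReal hδ0.le hcompl
  have h7 : (μ good).toReal = 1 - (μ goodᶜ).toReal := by
    rw [h5, ENNReal.toReal_sub_of_le prob_le_one ENNReal.one_ne_top, ENNReal.toReal_one]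
  show 1 - δ ≤ (μ good).toReal
  rw [h7]
  linarith
end

section
/- Let D be a random variable (the domain), and suppose the random vector V = E[XY | D] − E[XY] ∈ ℝ^p is symmetric (V and −V identically distributed). For n ≥ 2 i.i.d. domains d_1,...,d_n, coordinate i, μ̂_i = (1/n)∑_k E[X_iY|d_k], σ̂_i² = (1/(n−1))∑_k (E[X_iY|d_k] − μ̂_i)², and δ ∈ (0,1) with p ≤ (δ/2)e^{n/8}: with probability ≥ 1 − δ, for all i ≤ p, |μ̂_i − E[X_iY]| ≤ (σ̂_i/√n)·√(4 log(2p/δ)). -/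
open MeasureTheory ProbabilityTheory Finset

lemma sgn_mul_sq (b : Bool) (t : ℝ) : (sgn b * t) ^ 2 = t ^ 2 := by
  cases b <;> simp [sgn]

lemma chernoff_side {n : ℕ} (x : Fin n → ℝ) {c : ℝ} (hc : 0 < c) :
    ((Finset.univ.filter fun ε : Fin n → Bool =>
      Real.sqrt (c * ∑ k, (x k)^2) < ∑ k, sgn (ε k) * x k).card : ℝ)
    ≤ 2^n * Real.exp (-c/2) := by
  set Q := ∑ k, (x k)^2 with hQdef
  have hQ0 : 0 ≤ Q := Finset.sum_nonneg fun k _ => sq_nonneg _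
  rcases eq_or_lt_of_le hQ0 with hQ | hQ
  · -- Q = 0 → all x k = 0, event empty
    have hx : ∀ k ∈ Finset.univ, (x k)^2 = 0 := by
      intro k _
      have := (Finset.sum_eq_zero_iff_of_nonneg (fun k _ => sq_nonneg (x k))).1 hQ.symm
      exact this k (Finset.mem_univ k)
    have hx' : ∀ k, x k = 0 := fun k => by
      have := hx k (Finset.mem_univ k); nlinarith [this]
    have : (Finset.univ.filter fun ε : Fin n → Bool =>
        Real.sqrt (c * Q) < ∑ k, sgn (ε k) * x k) = ∅ := by
      apply Finset.filter_false_of_mem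
      intro ε _
      simp only [hx', mul_zero, Finset.sum_const_zero, not_lt]
      exact Real.sqrt_nonneg _
    rw [this]
    simp
    positivity
  · set s := Real.sqrt Q with hs
    have hspos : 0 < s := Real.sqrt_pos.2 hQ
    set lam := Real.sqrt c / s with hlam
    have hlampos : 0 < lam := div_pos (Real.sqrt_pos.2 hc) hspos
    have hT : Real.sqrt (c * Q) = Real.sqrt c * s := Real.sqrt_mul hc.le Q
    have hss : s ≠ 0 := hspos.ne'
    have hlamT : lam * Real.sqrt (c * Q) = c := by
      calc lam * Real.sqrt (c * Q) = Real.sqrt c / s * (Real.sqrt c * s) := by rw [hT]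
        _ = Real.sqrt c * Real.sqrt c * (s⁻¹ * s) := by ring
        _ = c := by rw [inv_mul_cancel₀ hss, mul_one, Real.mul_self_sqrt hc.le]
    -- step 1: Chernoff
    have step1 : ((Finset.univ.filter fun ε : Fin n → Bool =>
        Real.sqrt (c * Q) < ∑ k, sgn (ε k) * x k).card : ℝ)
        ≤ ∑ ε : Fin n → Bool, Real.exp (lam * (∑ k, sgn (ε k) * x k) - c) := by
      have h1 : ∀ ε ∈ (Finset.univ.filter fun ε : Fin n → Bool =>
          Real.sqrt (c * Q) < ∑ k, sgn (ε k) * x k),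
          (1 : ℝ) ≤ Real.exp (lam * (∑ k, sgn (ε k) * x k) - c) := by
        intro ε hε
        rw [Finset.mem_filter] at hε
        have hε' := hε.2
        rw [← Real.exp_zero]
        apply Real.exp_le_exp.2
        have : c ≤ lam * ∑ k, sgn (ε k) * x k := by
          rw [← hlamT]
          exact mul_le_mul_of_nonneg_left hε'.le hlampos.le
        linarith
      calc ((Finset.univ.filter fun ε : Fin n → Bool =>
            Real.sqrt (c * Q) < ∑ k, sgn (ε k) * x k).card : ℝ)
          = ∑ ε ∈ (Finset.univ.filter fun ε : Fin n → Bool =>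
            Real.sqrt (c * Q) < ∑ k, sgn (ε k) * x k), (1:ℝ) := by simp
        _ ≤ ∑ ε ∈ (Finset.univ.filter fun ε : Fin n → Bool =>
            Real.sqrt (c * Q) < ∑ k, sgn (ε k) * x k),
            Real.exp (lam * (∑ k, sgn (ε k) * x k) - c) := Finset.sum_le_sum h1
        _ ≤ _ := Finset.sum_le_sum_of_subset_of_nonneg (Finset.filter_subset _ _)
            (fun ε _ _ => (Real.exp_pos _).le)
    -- step 2: mgf factorization
    have step2 : (∑ ε : Fin n → Bool, Real.exp (lam * (∑ k, sgn (ε k) * x k) - c))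
        = Real.exp (-c) * ∏ k, (Real.exp (lam * x k) + Real.exp (-(lam * x k))) := by
      have : ∀ ε : Fin n → Bool, Real.exp (lam * (∑ k, sgn (ε k) * x k) - c)
          = Real.exp (-c) * ∏ k, Real.exp (lam * (sgn (ε k) * x k)) := by
        intro ε
        rw [← Real.exp_sum, ← Real.exp_add]
        congr 1
        rw [Finset.mul_sum]
        ring
      simp only [this, ← Finset.mul_sum]
      congr 1
      rw [← Fintype.prod_sum fun k (b : Bool) => Real.exp (lam * (sgn b * x k))]
      apply Finset.prod_congr rfl
      intro k _
      rw [Fintype.sum_bool]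
      simp [sgn]
    -- step 3: cosh bound
    have step3 : ∀ k, Real.exp (lam * x k) + Real.exp (-(lam * x k))
        ≤ 2 * Real.exp ((lam * x k)^2 / 2) := by
      intro k
      have := Real.cosh_le_exp_half_sq (lam * x k)
      rw [Real.cosh_eq] at this
      linarith
    have step3' : (∏ k, (Real.exp (lam * x k) + Real.exp (-(lam * x k))))
        ≤ 2^n * Real.exp (c / 2) := by
      calc (∏ k, (Real.exp (lam * x k) + Real.exp (-(lam * x k))))
          ≤ ∏ k, 2 * Real.exp ((lam * x k)^2 / 2) := by
            apply Finset.prod_le_prod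
            · intro k _; positivity
            · intro k _; exact step3 k
        _ = 2^n * Real.exp (∑ k, (lam * x k)^2 / 2) := by
            rw [Finset.prod_mul_distrib, Finset.prod_const, Real.exp_sum]
            simp
        _ = 2^n * Real.exp (c / 2) := by
            congr 1
            rw [← Finset.sum_div]
            congr 1
            have : ∑ k, (lam * x k)^2 = lam^2 * Q := by
              rw [hQdef, Finset.mul_sum]
              apply Finset.sum_congr rfl
              intro k _; ring
            rw [this, hlam, div_pow, Real.sq_sqrt hc.le, hs, Real.sq_sqrt hQ0]
            field_simp
    calc ((Finset.univ.filter fun ε : Fin n → Bool =>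
        Real.sqrt (c * Q) < ∑ k, sgn (ε k) * x k).card : ℝ)
        ≤ Real.exp (-c) * ∏ k, (Real.exp (lam * x k) + Real.exp (-(lam * x k))) := by
          rw [← step2]; exact step1
      _ ≤ Real.exp (-c) * (2^n * Real.exp (c / 2)) := by
          apply mul_le_mul_of_nonneg_left step3' (Real.exp_nonneg _)
      _ = 2^n * Real.exp (-c/2) := by
          rw [← mul_assoc, mul_comm (Real.exp (-c)), mul_assoc, ← Real.exp_add]
          ring_nf


lemma chernoff_two {n : ℕ} (x : Fin n → ℝ) {c : ℝ} (hc : 0 < c) :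
    ((Finset.univ.filter fun ε : Fin n → Bool =>
      c * ∑ k, (x k)^2 < (∑ k, sgn (ε k) * x k)^2).card : ℝ)
    ≤ 2^n * (2 * Real.exp (-c/2)) := by
  set Q := ∑ k, (x k)^2 with hQdef
  have hQ0 : 0 ≤ Q := Finset.sum_nonneg fun k _ => sq_nonneg _
  have hsub : (Finset.univ.filter fun ε : Fin n → Bool =>
      c * Q < (∑ k, sgn (ε k) * x k)^2)
      ⊆ (Finset.univ.filter fun ε : Fin n → Bool =>
        Real.sqrt (c * Q) < ∑ k, sgn (ε k) * x k)
      ∪ (Finset.univ.filter fun ε : Fin n → Bool =>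
        Real.sqrt (c * Q) < ∑ k, sgn (ε k) * (-(x k))) := by
    intro ε hε
    rw [Finset.mem_filter] at hε
    have h2 : Real.sqrt (c * Q) < |∑ k, sgn (ε k) * x k| := by
      rw [← Real.sqrt_sq_eq_abs]
      exact Real.sqrt_lt_sqrt (by positivity) hε.2
    rw [Finset.mem_union, Finset.mem_filter, Finset.mem_filter]
    rcases abs_cases (∑ k, sgn (ε k) * x k) with ⟨he, _⟩ | ⟨he, _⟩
    · left; exact ⟨Finset.mem_univ _, by rw [← he]; exact h2⟩
    · right
      refine ⟨Finset.mem_univ _, ?_⟩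
      have : ∑ k, sgn (ε k) * (-(x k)) = -∑ k, sgn (ε k) * x k := by
        rw [← Finset.sum_neg_distrib]
        exact Finset.sum_congr rfl fun k _ => by ring
      rw [this, ← he]
      exact h2
  have hQ' : ∑ k, (-(x k))^2 = Q := by
    rw [hQdef]; exact Finset.sum_congr rfl fun k _ => by ring
  calc ((Finset.univ.filter fun ε : Fin n → Bool =>
        c * Q < (∑ k, sgn (ε k) * x k)^2).card : ℝ)
      ≤ (((Finset.univ.filter fun ε : Fin n → Bool =>
          Real.sqrt (c * Q) < ∑ k, sgn (ε k) * x k)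
        ∪ (Finset.univ.filter fun ε : Fin n → Bool =>
          Real.sqrt (c * Q) < ∑ k, sgn (ε k) * (-(x k)))).card : ℝ) := by
        exact_mod_cast Nat.cast_le.2 (Finset.card_le_card hsub)
    _ ≤ ((Finset.univ.filter fun ε : Fin n → Bool =>
          Real.sqrt (c * Q) < ∑ k, sgn (ε k) * x k).card : ℝ)
        + ((Finset.univ.filter fun ε : Fin n → Bool =>
          Real.sqrt (c * Q) < ∑ k, sgn (ε k) * (-(x k))).card : ℝ) := by
        exact_mod_cast Nat.cast_le.2 (Finset.card_union_le _ _)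
    _ ≤ 2^n * Real.exp (-c/2) + 2^n * Real.exp (-c/2) := by
        have h1 := chernoff_side x hc
        have h2 := chernoff_side (fun k => -(x k)) hc
        rw [hQ'] at h2
        exact add_le_add h1 h2
    _ = 2^n * (2 * Real.exp (-c/2)) := by ring

lemma joint_pi {Ω : Type*} [MeasurableSpace Ω] (μ : Measure Ω) [IsProbabilityMeasure μ]
    {n : ℕ} (f : Fin n → Ω → ℝ) (hf : ∀ k, Measurable (f k))
    (hind : iIndepFun f μ) :
    Measure.map (fun ω k => f k ω) μ = Measure.pi (fun k => Measure.map (f k) μ) := by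
  haveI : ∀ k : Fin n, IsProbabilityMeasure (Measure.map (f k) μ) :=
    fun k => Measure.isProbabilityMeasure_map (hf k).aemeasurable
  refine (Measure.pi_eq fun s hs => ?_).symm
  rw [Measure.map_apply (measurable_pi_lambda _ fun k => hf k) (MeasurableSet.univ_pi hs)]
  have hpre : (fun ω k => f k ω) ⁻¹' Set.pi Set.univ s = ⋂ k ∈ Finset.univ, f k ⁻¹' s k := by
    ext ω; simp [Set.mem_pi]
  rw [hpre, hind.measure_inter_preimage_eq_mul Finset.univ (fun k _ => hs k)]
  exact Finset.prod_congr rfl fun k _ =>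
    (Measure.map_apply (hf k) (hs k)).symm


lemma sum_sq_dev {n : ℕ} (hn : 0 < n) (g : Fin n → ℝ) :
    ∑ k, (g k - (1/(n:ℝ)) * ∑ j, g j)^2 = (∑ k, (g k)^2) - (∑ k, g k)^2 / n := by
  have hn0 : (n:ℝ) ≠ 0 := Nat.cast_ne_zero.2 hn.ne'
  set S := ∑ j, g j with hS
  have h1 : ∀ k, (g k - (1/(n:ℝ)) * S)^2
      = (g k)^2 - (2*S/n) * g k + (S/n)^2 := by
    intro k; field_simp; ring
  rw [Finset.sum_congr rfl fun k _ => h1 k, Finset.sum_add_distrib,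
    Finset.sum_sub_distrib, ← Finset.mul_sum, ← hS, Finset.sum_const,
    Finset.card_univ, Fintype.card_fin, nsmul_eq_mul]
  field_simp
  ring

lemma alg_iff {nr a S Q : ℝ} (hn : 2 ≤ nr) (ha : 0 < a) (hQS : S^2/nr ≤ Q) :
    |S/nr| ≤ (Real.sqrt ((1/(nr-1)) * (Q - S^2/nr)) / Real.sqrt nr) * Real.sqrt a
    ↔ S^2 ≤ (a * nr / (nr - 1 + a)) * Q := by
  have hn0 : (0:ℝ) < nr := by linarith
  have hn1 : (0:ℝ) < nr - 1 := by linarith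
  have hd : (0:ℝ) < nr - 1 + a := by linarith
  have hQS' : 0 ≤ Q - S^2/nr := by linarith
  have harg : 0 ≤ (1/(nr-1)) * (Q - S^2/nr) / nr * a := by positivity
  have hrhs : (Real.sqrt ((1/(nr-1)) * (Q - S^2/nr)) / Real.sqrt nr) * Real.sqrt a
      = Real.sqrt ((1/(nr-1)) * (Q - S^2/nr) / nr * a) := by
    rw [Real.sqrt_mul (by positivity) a, Real.sqrt_div (by positivity) nr]
  rw [hrhs, ← Real.sqrt_sq_eq_abs, Real.sqrt_le_sqrt_iff harg]
  have hstep : (S/nr)^2 ≤ (1/(nr-1)) * (Q - S^2/nr) / nr * a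
      ↔ S^2 * (nr - 1 + a) ≤ a * nr * Q := by
    have he : (1/(nr-1)) * (Q - S^2/nr) / nr * a = a * (nr * Q - S^2) / ((nr-1) * nr^2) := by
      field_simp
    have he2 : (S/nr)^2 = S^2 / nr^2 := by rw [div_pow]
    rw [he, he2, div_le_div_iff₀ (by positivity) (by positivity)]
    constructor <;> intro h
    · have h2 : (S^2*(nr-1)) * nr^2 ≤ (a*(nr*Q - S^2)) * nr^2 := by
        ring_nf; ring_nf at h; linarith
      have h3 := le_of_mul_le_mul_right h2 (by positivity : (0:ℝ) < nr^2)
      nlinarith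
    · have h3 : S^2*(nr-1) ≤ a*(nr*Q - S^2) := by nlinarith
      have h2 := mul_le_mul_of_nonneg_right h3 (by positivity : (0:ℝ) ≤ nr^2)
      nlinarith
  rw [hstep, show (a * nr / (nr - 1 + a)) * Q = a * nr * Q / (nr - 1 + a) by ring,
    le_div_iff₀ hd]

/-- Theorem 1 of the paper: uniform confidence bound over p features.
`C k ω i` denotes the conditional covariance E[X_i Y | D = d_k] for the k-th training
domain, where the randomness ω is the i.i.d. draw of the n domains; `m i = E[X_i Y]`.
The centered conditional covariance vector is assumed symmetric. -/
theorem stmt_12 {Ω : Type*} [MeasurableSpace Ω] (μ : Measure Ω) [IsProbabilityMeasure μ]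
    (p : ℕ) (hp : 0 < p) (n : ℕ) (hn : 2 ≤ n)
    (C : Fin n → Ω → Fin p → ℝ) (m : Fin p → ℝ)
    (hmeas : ∀ k, Measurable (C k))
    (hindep : iIndepFun C μ)
    (hident : ∀ k l, Measure.map (C k) μ = Measure.map (C l) μ)
    (hsym : ∀ k, Measure.map (fun ω i => C k ω i - m i) μ
      = Measure.map (fun ω i => -(C k ω i - m i)) μ)
    (μhat : Ω → Fin p → ℝ) (hμ : ∀ ω i, μhat ω i = (1 / (n : ℝ)) * ∑ k, C k ω i)
    (σhat : Ω → Fin p → ℝ)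
    (hσ : ∀ ω i, σhat ω i =
      Real.sqrt ((1 / ((n : ℝ) - 1)) * ∑ k, (C k ω i - μhat ω i) ^ 2))
    (δ : ℝ) (hδ0 : 0 < δ) (hδ1 : δ < 1)
    (hsize : (p : ℝ) ≤ (δ / 2) * Real.exp ((n : ℝ) / 8)) :
    1 - δ ≤ (μ {ω | ∀ i, |μhat ω i - m i| ≤
      (σhat ω i / Real.sqrt n) * Real.sqrt (4 * Real.log (2 * p / δ))}).toReal := by
  have hn0 : 0 < n := by omega
  have hnr2 : (2:ℝ) ≤ (n:ℝ) := by exact_mod_cast hn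
  have hnr0 : (0:ℝ) < n := by linarith
  have hp1 : (1:ℝ) ≤ (p:ℝ) := by exact_mod_cast hp
  have hratio : (1:ℝ) < 2 * p / δ := by
    rw [lt_div_iff₀ hδ0]; nlinarith
  have hratio0 : (0:ℝ) < 2 * p / δ := by positivity
  set a := 4 * Real.log (2 * p / δ) with ha_def
  have hloga : 0 < Real.log (2 * p / δ) := Real.log_pos hratio
  have ha : 0 < a := by positivity
  have halog : Real.log (2 * p / δ) ≤ (n:ℝ) / 8 := by
    have h2 : 2 * (p:ℝ) / δ ≤ Real.exp ((n:ℝ)/8) := by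
      rw [div_le_iff₀ hδ0]; nlinarith [Real.exp_pos ((n:ℝ)/8)]
    calc Real.log (2 * p / δ) ≤ Real.log (Real.exp ((n:ℝ)/8)) :=
          Real.log_le_log hratio0 h2
      _ = (n:ℝ)/8 := Real.log_exp _
  have han : a ≤ (n:ℝ)/2 := by rw [ha_def]; linarith
  have hd : (0:ℝ) < (n:ℝ) - 1 + a := by linarith
  set c := a * (n:ℝ) / ((n:ℝ) - 1 + a) with hc_def
  have hc : 0 < c := by positivity
  have hc2 : a / 2 ≤ c := by
    rw [hc_def, le_div_iff₀ hd]; nlinarith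
  have hfinal : 2 * Real.exp (-c/2) ≤ δ / p := by
    have h1 : Real.exp (-c/2) ≤ Real.exp (-(a/4)) :=
      Real.exp_le_exp.2 (by linarith)
    have h2 : Real.exp (-(a/4)) = δ / (2 * p) := by
      have : a / 4 = Real.log (2 * p / δ) := by rw [ha_def]; ring
      rw [this, Real.exp_neg, Real.exp_log hratio0, inv_div]
    have h3 : 2 * (δ / (2 * p)) = δ / p := by
      field_simp
    calc 2 * Real.exp (-c/2) ≤ 2 * Real.exp (-(a/4)) := by linarith
      _ = δ / p := by rw [h2, h3]
  -- measurable coordinate functions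
  have hmg : ∀ (i : Fin p) (k : Fin n), Measurable (fun ω => C k ω i - m i) :=
    fun i k => ((measurable_pi_apply i).comp (hmeas k)).sub measurable_const
  -- bad sets
  set Bad : Fin p → Set Ω := fun i =>
    {ω | c * ∑ k, (C k ω i - m i)^2 < (∑ k, (C k ω i - m i))^2} with hBad_def
  have hBadMeas : ∀ i, MeasurableSet (Bad i) := by
    intro i
    apply measurableSet_lt
    · exact (Finset.measurable_sum Finset.univ fun k _ => (hmg i k).pow_const 2).const_mul c
    · exact (Finset.measurable_sum Finset.univ fun k _ => hmg i k).pow_const 2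
  -- per-coordinate bound
  have hBadLe : ∀ i, μ (Bad i) ≤ ENNReal.ofReal (δ / p) := by
    intro i
    classical
    set g : Fin n → Ω → ℝ := fun k ω => C k ω i - m i with hg_def
    have k0 : Fin n := ⟨0, hn0⟩
    have hgm : ∀ k, Measurable (g k) := fun k => hmg i k
    have hgind : iIndepFun g μ :=
      hindep.comp (fun _ (v : Fin p → ℝ) => v i - m i)
        (fun _ => (measurable_pi_apply i).sub measurable_const)
    set ρ := Measure.map (g k0) μ with hρ_def
    haveI hρprob : IsProbabilityMeasure ρ :=
      Measure.isProbabilityMeasure_map (hgm k0).aemeasurable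
    have hφ : Measurable (fun v : Fin p → ℝ => v i - m i) :=
      (measurable_pi_apply i).sub measurable_const
    have hmapg : ∀ k, Measure.map (g k) μ = ρ := by
      intro k
      have h1 : Measure.map (g k) μ
          = Measure.map (fun v : Fin p → ℝ => v i - m i) (Measure.map (C k) μ) :=
        (Measure.map_map hφ (hmeas k)).symm
      have h2 : Measure.map (g k0) μ
          = Measure.map (fun v : Fin p → ℝ => v i - m i) (Measure.map (C k0) μ) :=
        (Measure.map_map hφ (hmeas k0)).symm
      rw [hρ_def, h1, h2, hident k k0]
    have hF : Measurable (fun ω => fun j => C k0 ω j - m j) :=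
      measurable_pi_lambda _ fun j =>
        ((measurable_pi_apply j).comp (hmeas k0)).sub measurable_const
    have hFn : Measurable (fun ω => fun j => -(C k0 ω j - m j)) :=
      measurable_pi_lambda _ fun j =>
        (((measurable_pi_apply j).comp (hmeas k0)).sub measurable_const).neg
    have hsymρ : Measure.map (fun t : ℝ => -t) ρ = ρ := by
      have e1 : Measure.map (fun x : Fin p → ℝ => x i)
          (Measure.map (fun ω j => C k0 ω j - m j) μ) = ρ := by
        rw [Measure.map_map (measurable_pi_apply i) hF, hρ_def]
        rfl
      have e2 : Measure.map (fun x : Fin p → ℝ => x i)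
          (Measure.map (fun ω j => -(C k0 ω j - m j)) μ)
          = Measure.map (fun ω => -(g k0 ω)) μ := by
        rw [Measure.map_map (measurable_pi_apply i) hFn]
        rfl
      have e3 : Measure.map (fun ω => -(g k0 ω)) μ = Measure.map (fun t : ℝ => -t) ρ := by
        rw [hρ_def, Measure.map_map measurable_neg (hgm k0)]
        rfl
      calc Measure.map (fun t : ℝ => -t) ρ
          = Measure.map (fun ω => -(g k0 ω)) μ := e3.symm
        _ = Measure.map (fun x : Fin p → ℝ => x i)
            (Measure.map (fun ω j => -(C k0 ω j - m j)) μ) := e2.symm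
        _ = Measure.map (fun x : Fin p → ℝ => x i)
            (Measure.map (fun ω j => C k0 ω j - m j) μ) := by rw [← hsym k0]
        _ = ρ := e1
    have hmargin : ∀ (b : Bool) (k : Fin n),
        Measure.map (fun ω => sgn b * g k ω) μ = ρ := by
      intro b k
      cases b
      · have hne : (fun ω => sgn false * g k ω) = fun ω => -(g k ω) := by
          funext ω; simp [sgn]
        rw [hne]
        have : Measure.map (fun ω => -(g k ω)) μ
            = Measure.map (fun t : ℝ => -t) (Measure.map (g k) μ) :=
          (Measure.map_map measurable_neg (hgm k)).symm
        rw [this, hmapg k, hsymρ]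
      · have hne : (fun ω => sgn true * g k ω) = g k := by
          funext ω; simp [sgn]
        rw [hne, hmapg k]
    have hjoint : ∀ ε : Fin n → Bool,
        Measure.map (fun ω k => sgn (ε k) * g k ω) μ = Measure.pi (fun _ => ρ) := by
      intro ε
      have hind' : iIndepFun (fun k ω => sgn (ε k) * g k ω) μ :=
        hgind.comp (fun k (t : ℝ) => sgn (ε k) * t) (fun k => measurable_const_mul _)
      rw [joint_pi μ _ (fun k => (hgm k).const_mul _) hind']
      exact congrArg Measure.pi (funext fun k => hmargin (ε k) k)
    set B : Set (Fin n → ℝ) := {x | c * ∑ k, (x k)^2 < (∑ k, x k)^2} with hB_def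
    have hBmeas : MeasurableSet B :=
      measurableSet_lt
        ((Finset.measurable_sum Finset.univ fun k _ =>
          (measurable_pi_apply k).pow_const 2).const_mul c)
        ((Finset.measurable_sum Finset.univ fun k _ => measurable_pi_apply k).pow_const 2)
    have hHmeas : ∀ ε : Fin n → Bool, Measurable (fun ω k => sgn (ε k) * g k ω) :=
      fun ε => measurable_pi_lambda _ fun k => (hgm k).const_mul _
    set A : (Fin n → Bool) → Set Ω :=
      fun ε => (fun ω k => sgn (ε k) * g k ω) ⁻¹' B with hA_def
    have hAmeas : ∀ ε, MeasurableSet (A ε) := fun ε => (hHmeas ε) hBmeas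
    have hAval : ∀ ε, μ (A ε) = Measure.pi (fun _ : Fin n => ρ) B := by
      intro ε
      rw [hA_def, ← Measure.map_apply (hHmeas ε) hBmeas, hjoint ε]
    have hAeqset : ∀ (ε : Fin n → Bool) ω, ω ∈ A ε ↔
        c * ∑ k, (g k ω)^2 < (∑ k, sgn (ε k) * g k ω)^2 := by
      intro ε ω
      simp only [hA_def, Set.mem_preimage, hB_def, Set.mem_setOf_eq]
      rw [show ∑ k, (sgn (ε k) * g k ω)^2 = ∑ k, (g k ω)^2 from
        Finset.sum_congr rfl fun k _ => sgn_mul_sq _ _]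
    have hBadA : Bad i = A (fun _ => true) := by
      ext ω
      rw [hAeqset]
      simp only [hBad_def, Set.mem_setOf_eq, sgn, if_true, one_mul]
      exact Iff.rfl
    have hcount : ∀ ω, (∑ ε : Fin n → Bool, (A ε).indicator (fun _ => (1:ENNReal)) ω)
        ≤ ENNReal.ofReal (2^n * (2 * Real.exp (-c/2))) := by
      intro ω
      have h1 : (∑ ε : Fin n → Bool, (A ε).indicator (fun _ => (1:ENNReal)) ω)
          = ((Finset.univ.filter fun ε : Fin n → Bool =>
              c * ∑ k, (g k ω)^2 < (∑ k, sgn (ε k) * g k ω)^2).card : ENNReal) := by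
        rw [← Finset.sum_boole]
        apply Finset.sum_congr rfl
        intro ε _
        rw [Set.indicator_apply]
        by_cases hω : ω ∈ A ε
        · rw [if_pos hω, if_pos ((hAeqset ε ω).mp hω)]
        · rw [if_neg hω, if_neg (fun hcon => hω ((hAeqset ε ω).mpr hcon))]
      rw [h1, ← ENNReal.ofReal_natCast]
      exact ENNReal.ofReal_le_ofReal (chernoff_two (fun k => g k ω) hc)
    have hsum : ∑ ε : Fin n → Bool, μ (A ε)
        ≤ ENNReal.ofReal (2^n * (2 * Real.exp (-c/2))) := by
      have hint : ∀ ε : Fin n → Bool,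
          μ (A ε) = ∫⁻ ω, (A ε).indicator (fun _ => (1:ENNReal)) ω ∂μ := by
        intro ε
        exact (lintegral_indicator_one (hAmeas ε)).symm
      calc ∑ ε : Fin n → Bool, μ (A ε)
          = ∫⁻ ω, ∑ ε : Fin n → Bool, (A ε).indicator (fun _ => (1:ENNReal)) ω ∂μ := by
            rw [lintegral_finset_sum _ fun ε _ => measurable_const.indicator (hAmeas ε)]
            exact Finset.sum_congr rfl fun ε _ => hint ε
        _ ≤ ∫⁻ _ω, ENNReal.ofReal (2^n * (2 * Real.exp (-c/2))) ∂μ := lintegral_mono hcount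
        _ = ENNReal.ofReal (2^n * (2 * Real.exp (-c/2))) := by
            rw [lintegral_const, measure_univ, mul_one]
    have hconst : ∑ ε : Fin n → Bool, μ (A ε) = (2^n : ENNReal) * μ (Bad i) := by
      have hAll : ∀ ε : Fin n → Bool, μ (A ε) = μ (Bad i) := by
        intro ε; rw [hAval ε, hBadA, hAval]
      rw [Finset.sum_congr rfl fun ε _ => hAll ε, Finset.sum_const, Finset.card_univ,
        nsmul_eq_mul]
      congr 1
      rw [Fintype.card_fun]
      push_cast
      simp
    have hofr : ENNReal.ofReal ((2:ℝ)^n * (2 * Real.exp (-c/2)))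
        = (2^n : ENNReal) * ENNReal.ofReal (2 * Real.exp (-c/2)) := by
      rw [ENNReal.ofReal_mul (by positivity)]
      congr 1
      rw [ENNReal.ofReal_pow (by norm_num)]
      norm_num
    have hkey : (2^n : ENNReal) * μ (Bad i)
        ≤ (2^n : ENNReal) * ENNReal.ofReal (2 * Real.exp (-c/2)) := by
      rw [← hconst, ← hofr]
      exact hsum
    have h2n0 : (2^n : ENNReal) ≠ 0 := by positivity
    have h2nt : (2^n : ENNReal) ≠ ⊤ := by
      exact ENNReal.pow_ne_top (by norm_num)
    have hBle : μ (Bad i) ≤ ENNReal.ofReal (2 * Real.exp (-c/2)) :=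
      (ENNReal.mul_le_mul_iff_right h2n0 h2nt).mp hkey
    exact le_trans hBle (ENNReal.ofReal_le_ofReal hfinal)
  -- the good event equals complement of the union of bad events
  have hGeq : {ω | ∀ i, |μhat ω i - m i| ≤
      (σhat ω i / Real.sqrt n) * Real.sqrt (4 * Real.log (2 * p / δ))}
      = (⋃ i, Bad i)ᶜ := by
    ext ω
    simp only [Set.mem_setOf_eq, Set.mem_compl_iff, Set.mem_iUnion, not_exists, hBad_def,
      not_lt]
    apply forall_congr'
    intro i
    set S := ∑ k, (C k ω i - m i) with hS
    set Q := ∑ k, (C k ω i - m i)^2 with hQ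
    have hsumC : ∑ k, C k ω i = S + n * m i := by
      rw [hS, Finset.sum_sub_distrib, Finset.sum_const, Finset.card_univ,
        Fintype.card_fin, nsmul_eq_mul]
      ring
    have hμm : μhat ω i - m i = S / n := by
      rw [hμ ω i, hsumC]; field_simp; ring
    have hdev : ∀ k, C k ω i - μhat ω i = (C k ω i - m i) - (1/(n:ℝ)) * S := by
      intro k
      rw [hμ ω i, hsumC]
      field_simp
      ring
    have hssd : ∑ k, (C k ω i - μhat ω i)^2 = Q - S^2 / n := by
      calc ∑ k, (C k ω i - μhat ω i)^2
          = ∑ k, ((C k ω i - m i) - (1/(n:ℝ)) * ∑ j, (C j ω i - m i))^2 :=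
            Finset.sum_congr rfl fun k _ => by rw [hdev k, hS]
        _ = Q - S^2 / n := sum_sq_dev hn0 _
    have hQS : S^2/(n:ℝ) ≤ Q := by
      have h0 : 0 ≤ ∑ k, (C k ω i - μhat ω i)^2 :=
        Finset.sum_nonneg fun k _ => sq_nonneg _
      rw [hssd] at h0; linarith
    have hσm : σhat ω i = Real.sqrt ((1/((n:ℝ)-1)) * (Q - S^2/n)) := by
      rw [hσ ω i, hssd]
    rw [hμm, hσm, alg_iff hnr2 ha hQS]
  rw [hGeq]
  have hU : MeasurableSet (⋃ i, Bad i) := MeasurableSet.iUnion hBadMeas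
  have hUb : μ (⋃ i, Bad i) ≤ ENNReal.ofReal δ := by
    calc μ (⋃ i, Bad i) ≤ ∑' i, μ (Bad i) := measure_iUnion_le _
      _ = ∑ i, μ (Bad i) := tsum_fintype _
      _ ≤ ∑ j : Fin p, ENNReal.ofReal (δ / p) := Finset.sum_le_sum fun j _ => hBadLe j
      _ = (p : ENNReal) * ENNReal.ofReal (δ / p) := by
          rw [Finset.sum_const, Finset.card_univ, Fintype.card_fin, nsmul_eq_mul]
      _ = ENNReal.ofReal δ := by
          rw [← ENNReal.ofReal_natCast p, ← ENNReal.ofReal_mul (by positivity)]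
          congr 1
          field_simp
  rw [prob_compl_eq_one_sub hU]
  have hδ1' : μ (⋃ i, Bad i) ≤ 1 :=
    le_trans hUb (by simpa using ENNReal.ofReal_le_one.2 hδ1.le)
  rw [ENNReal.toReal_sub_of_le hδ1' (by simp)]
  have := ENNReal.toReal_le_of_le_ofReal hδ0.le hUb
  simp only [ENNReal.toReal_one]
  linarith
end
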